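/- arXiv:1601.04268 — 5 statements merged into one kernel-verified Lean document; each statement's English description precedes it below -/
import Mathlib

section
/- Let M be an element of the symplectic group Ω₂ = Sp(4,ℝ). Then M<Z> = Z for every Z ∈ Ĥ₂ if and only if M = I, M = −I, M = Q, or M = −Q. -/
open Matrix Complex

noncomputable section

abbrev Mat2 : Type := Matrix (Fin 2) (Fin 2) ℂ
abbrev Mat2R : Type := Matrix (Fin 2) (Fin 2) ℝ
abbrev Mat4 : Type := Matrix (Fin 2 ⊕ Fin 2) (Fin 2 ⊕ Fin 2) ℝ

/-- `q = [[0,1],[1,0]]`. -/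
def qR : Mat2R := !![0, 1; 1, 0]

/-- `J = [[0, I₂],[−I₂, 0]]` (4×4). -/
def Jmat : Mat4 := Matrix.fromBlocks 0 1 (-1) 0

/-- `Q = diag(q, q)` (4×4). -/
def Qmat : Mat4 := Matrix.fromBlocks qR 0 0 qR

/-- `Ω₂ = Sp(4,ℝ) = {M : ᵗM J M = J}`. -/
def Omega2 : Set Mat4 := {M | Mᵀ * Jmat * M = Jmat}

/-- The new Siegel upper half space `Ĥ₂`: bi-symmetric `Z = [[τ,z],[z,τ]]` with `Im τ > |Im z|`. -/
def Hhat : Set Mat2 :=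
  {Z | Z 1 1 = Z 0 0 ∧ Z 1 0 = Z 0 1 ∧ |(Z 0 1).im| < (Z 0 0).im}

/-- The action `M<Z> = (AZ+B)(CZ+D)⁻¹` of a real 4×4 matrix in 2×2 blocks on `Z ∈ ℂ^{2×2}`. -/
def act (M : Mat4) (Z : Mat2) : Mat2 :=
  (M.toBlocks₁₁.map Complex.ofReal * Z + M.toBlocks₁₂.map Complex.ofReal) *
    (M.toBlocks₂₁.map Complex.ofReal * Z + M.toBlocks₂₂.map Complex.ofReal)⁻¹

/-- `Ω̂₂ = {M ∈ Ω₂ : M<Z> ∈ Ĥ₂ for all Z ∈ Ĥ₂}`. -/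
def OmegaHat : Set Mat4 := {M | M ∈ Omega2 ∧ ∀ Z ∈ Hhat, act M Z ∈ Hhat}

/-- complexified q -/
def qC : Mat2 := !![0, 1; 1, 0]

lemma qR_map : qR.map Complex.ofReal = qC := by
  ext i j; fin_cases i <;> fin_cases j <;> simp [qR, qC]

lemma qC_sq : qC * qC = 1 := by
  ext i j; fin_cases i <;> fin_cases j <;>
    simp [qC, Matrix.mul_apply, Fin.sum_univ_two, Matrix.one_apply]

lemma comm_qC (Z : Mat2) (hZ : Z ∈ Hhat) : qC * Z = Z * qC := by
  obtain ⟨h1, h2, _⟩ := hZ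
  ext i j; fin_cases i <;> fin_cases j <;>
    simp [qC, Matrix.mul_apply, Fin.sum_univ_two, h1, h2]

lemma act_diag (A : Mat2R) (h2 : A.map Complex.ofReal * A.map Complex.ofReal = 1)
    (hc : ∀ Z ∈ Hhat, A.map Complex.ofReal * Z = Z * A.map Complex.ofReal) :
    ∀ Z ∈ Hhat, act (Matrix.fromBlocks A 0 0 A) Z = Z := by
  intro Z hZ
  have hz : ((0 : Mat2R).map Complex.ofReal) = 0 := by ext i j; simp
  rw [act, Matrix.toBlocks_fromBlocks₁₁, Matrix.toBlocks_fromBlocks₁₂,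
    Matrix.toBlocks_fromBlocks₂₁, Matrix.toBlocks_fromBlocks₂₂, hz,
    Matrix.zero_mul, zero_add, add_zero, Matrix.inv_eq_left_inv h2, hc Z hZ,
    mul_assoc, h2, mul_one]

lemma key (a b c d Z : Mat2) (hz : 0 < (Z 0 0).im)
    (h : (a * Z + b) * (c * Z + d)⁻¹ = Z) :
    a * Z + b = Z * (c * Z + d) := by
  by_cases hu : IsUnit (c * Z + d).det
  · have h' := congrArg (· * (c * Z + d)) h
    simpa [mul_assoc, Matrix.nonsing_inv_mul _ hu] using h'
  · rw [Matrix.nonsing_inv_apply_not_isUnit _ hu, mul_zero] at h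
    exfalso
    have : Z 0 0 = 0 := by rw [← h]; simp
    rw [this] at hz; simp at hz

/-- For `M ∈ Ω₂`, `M<Z> = Z` for every `Z ∈ Ĥ₂` iff `M = ±I` or `M = ±Q`. -/
theorem stmt_0 (M : Mat4) (hM : M ∈ Omega2) :
    (∀ Z ∈ Hhat, act M Z = Z) ↔ (M = 1 ∨ M = -1 ∨ M = Qmat ∨ M = -Qmat) := by
  constructor
  · intro h
    set A := M.toBlocks₁₁ with hA
    set B := M.toBlocks₁₂ with hB
    set C := M.toBlocks₂₁ with hC
    set D := M.toBlocks₂₂ with hD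
    have key' : ∀ Z ∈ Hhat,
        A.map Complex.ofReal * Z + B.map Complex.ofReal
          = Z * (C.map Complex.ofReal * Z + D.map Complex.ofReal) := by
      intro Z hZ
      exact key _ _ _ _ Z (lt_of_le_of_lt (abs_nonneg _) hZ.2.2) (h Z hZ)
    have m1 : (!![Complex.I, 0; 0, Complex.I] : Mat2) ∈ Hhat := by
      refine ⟨by simp, by simp, by norm_num⟩
    have m2 : (!![2*Complex.I, 0; 0, 2*Complex.I] : Mat2) ∈ Hhat := by
      refine ⟨by simp, by simp, by norm_num⟩
    have m3 : (!![Complex.I, 1; 1, Complex.I] : Mat2) ∈ Hhat := by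
      refine ⟨by simp, by simp, by norm_num⟩
    have E1 := key' _ m1
    have E2 := key' _ m2
    have E3 := key' _ m3
    -- entrywise scalar equations from E1, E2
    have e1 : ∀ i j, Complex.I * (A i j : ℂ) + (B i j : ℂ)
        = Complex.I * (Complex.I * (C i j : ℂ) + (D i j : ℂ)) := by
      intro i j
      have := congrFun (congrFun E1 i) j
      fin_cases i <;> fin_cases j <;>
        simpa [Matrix.mul_apply, Fin.sum_univ_two, Matrix.add_apply, Matrix.map_apply,
          mul_comm] using this
    have e2 : ∀ i j, 2*Complex.I * (A i j : ℂ) + (B i j : ℂ)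
        = 2*Complex.I * (2*Complex.I * (C i j : ℂ) + (D i j : ℂ)) := by
      intro i j
      have := congrFun (congrFun E2 i) j
      fin_cases i <;> fin_cases j <;>
        simpa [Matrix.mul_apply, Fin.sum_univ_two, Matrix.add_apply, Matrix.map_apply,
          mul_comm] using this
    have hB0 : B = 0 := by
      ext i j
      have r1 := congrArg Complex.re (e1 i j)
      have r2 := congrArg Complex.re (e2 i j)
      simp [Complex.add_re, Complex.mul_re, Complex.mul_im] at r1 r2
      simp only [Matrix.zero_apply]
      linarith
    have hC0 : C = 0 := by
      ext i j
      have r1 := congrArg Complex.re (e1 i j)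
      have r2 := congrArg Complex.re (e2 i j)
      simp [Complex.add_re, Complex.mul_re, Complex.mul_im] at r1 r2
      simp only [Matrix.zero_apply]
      linarith
    have hAD : A = D := by
      ext i j
      have r1 := congrArg Complex.im (e1 i j)
      simp [Complex.add_im, Complex.mul_re, Complex.mul_im] at r1
      linarith
    -- E3 gives commutation with q
    rw [hB0, hC0, ← hAD] at E3
    simp only [Matrix.map_zero, Complex.ofReal_zero, Matrix.zero_mul, zero_add,
      add_zero] at E3
    have h10 : A 1 0 = A 0 1 := by
      have h := congrArg Complex.re (congrFun (congrFun E3 0) 0)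
      simpa [Matrix.mul_apply, Fin.sum_univ_two, Matrix.map_apply, Complex.add_re,
        Complex.mul_re] using h.symm
    have h11 : A 1 1 = A 0 0 := by
      have h := congrArg Complex.re (congrFun (congrFun E3 0) 1)
      simpa [Matrix.mul_apply, Fin.sum_univ_two, Matrix.map_apply, Complex.add_re,
        Complex.mul_re, eq_comm] using h
    -- block form of M
    have hMb : M = Matrix.fromBlocks A 0 0 A := by
      rw [← Matrix.fromBlocks_toBlocks M, ← hA, ← hB, ← hC, ← hD, hB0, hC0, ← hAD]
    -- symplectic condition gives Aᵀ A = 1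
    have hsymp : Aᵀ * A = 1 := by
      have hs : Mᵀ * Jmat * M = Jmat := hM
      rw [hMb, Jmat, Matrix.fromBlocks_transpose, Matrix.fromBlocks_multiply,
        Matrix.fromBlocks_multiply] at hs
      simp only [Matrix.mul_zero, Matrix.zero_mul, Matrix.mul_one, Matrix.mul_neg,
        add_zero, zero_add, Matrix.transpose_zero, Matrix.zero_mul, neg_zero,
        Matrix.neg_mul] at hs
      have := congrArg Matrix.toBlocks₁₂ hs
      simpa using this
    have t1 : A 0 0 * A 0 0 + A 1 0 * A 1 0 = 1 := by
      have := congrFun (congrFun hsymp 0) 0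
      simpa [Matrix.mul_apply, Fin.sum_univ_two, Matrix.one_apply] using this
    have t2 : A 0 0 * A 0 1 + A 1 0 * A 1 1 = 0 := by
      have := congrFun (congrFun hsymp 0) 1
      simpa [Matrix.mul_apply, Fin.sum_univ_two, Matrix.one_apply] using this
    rw [h10] at t1 t2
    rw [h11] at t2
    have hxy : A 0 0 * A 0 1 = 0 := by linear_combination t2 / 2
    rcases mul_eq_zero.mp hxy with hx | hy
    · -- A 0 0 = 0, so A = ±q
      have hy1 : A 0 1 * A 0 1 = 1 := by rw [hx] at t1; linarith
      rcases mul_self_eq_one_iff.mp hy1 with h1 | h1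
      · right; right; left
        rw [hMb]
        have : A = qR := by
          ext i j; fin_cases i <;> fin_cases j <;> simp [qR, hx, h1, h10, h11]
        rw [this]; rfl
      · right; right; right
        rw [hMb]
        have : A = -qR := by
          ext i j; fin_cases i <;> fin_cases j <;> simp [qR, hx, h1, h10, h11]
        rw [this, Qmat, Matrix.fromBlocks_neg, neg_zero]
    · -- A 0 1 = 0, so A = ±1
      have hx1 : A 0 0 * A 0 0 = 1 := by rw [hy] at t1; linarith
      rcases mul_self_eq_one_iff.mp hx1 with h1 | h1
      · left
        rw [hMb]
        have : A = 1 := by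
          ext i j; fin_cases i <;> fin_cases j <;>
            simp [Matrix.one_apply, hy, h1, h10, h11]
        rw [this]; exact Matrix.fromBlocks_one
      · right; left
        rw [hMb]
        have : A = -1 := by
          ext i j; fin_cases i <;> fin_cases j <;>
            simp [Matrix.one_apply, hy, h1, h10, h11]
        rw [this, ← Matrix.fromBlocks_one, Matrix.fromBlocks_neg, neg_zero]
  · have hmap1 : (1 : Mat2R).map Complex.ofReal = 1 :=
      Matrix.map_one _ Complex.ofReal_zero Complex.ofReal_one
    have hmapn1 : ((-1 : Mat2R)).map Complex.ofReal = -1 := by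
      ext i j; fin_cases i <;> fin_cases j <;> simp [Matrix.one_apply]
    rintro (rfl | rfl | rfl | rfl)
    · rw [← Matrix.fromBlocks_one (l := Fin 2) (m := Fin 2) (α := ℝ)]
      exact act_diag 1 (by rw [hmap1]; simp) (fun Z _ => by rw [hmap1]; simp)
    · have : (-1 : Mat4) = Matrix.fromBlocks (-1) 0 0 (-1) := by
        rw [← Matrix.fromBlocks_one, Matrix.fromBlocks_neg, neg_zero]
      rw [this]
      exact act_diag (-1) (by rw [hmapn1]; simp) (fun Z _ => by rw [hmapn1]; simp)
    · rw [Qmat]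
      exact act_diag qR (by rw [qR_map]; exact qC_sq)
        (fun Z hZ => by rw [qR_map]; exact comm_qC Z hZ)
    · have : (-Qmat : Mat4) = Matrix.fromBlocks (-qR) 0 0 (-qR) := by
        rw [Qmat, Matrix.fromBlocks_neg, neg_zero]
      rw [this]
      have hmapnq : ((-qR : Mat2R)).map Complex.ofReal = -qC := by
        ext i j; fin_cases i <;> fin_cases j <;> simp [qR, qC]
      refine act_diag (-qR) (by rw [hmapnq]; simp [qC_sq]) (fun Z hZ => ?_)
      rw [hmapnq, neg_mul, comm_qC Z hZ, mul_neg]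
end
end

section
/- A matrix M ∈ Ω₂ = Sp(4,ℝ) satisfies M<Z> ∈ Ĥ₂ for every Z ∈ Ĥ₂ if and only if MQ = QM or MQ = −QM. Consequently Ω̂₂ := {M ∈ Ω₂ : M<Z> ∈ Ĥ₂ for all Z ∈ Ĥ₂} = {M ∈ Ω₂ : MQ = ±QM} is a subgroup of Ω₂ acting on Ĥ₂ by (M,Z) ↦ M<Z>. -/
open Matrix Complex

noncomputable section

-- block abbreviations
def bA (M : Mat4) : Mat2 := M.toBlocks₁₁.map Complex.ofReal
def bB (M : Mat4) : Mat2 := M.toBlocks₁₂.map Complex.ofReal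
def bC (M : Mat4) : Mat2 := M.toBlocks₂₁.map Complex.ofReal
def bD (M : Mat4) : Mat2 := M.toBlocks₂₂.map Complex.ofReal
def num (M : Mat4) (Z : Mat2) : Mat2 := bA M * Z + bB M
def den (M : Mat4) (Z : Mat2) : Mat2 := bC M * Z + bD M

lemma act_eq (M : Mat4) (Z : Mat2) : act M Z = num M Z * (den M Z)⁻¹ := rfl

lemma zero_not_hhat : (0 : Mat2) ∉ Hhat := by
  simp [Hhat]

lemma det_den_ne {M : Mat4} (hM : ∀ Z ∈ Hhat, act M Z ∈ Hhat) {Z : Mat2} (hZ : Z ∈ Hhat) :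
    (den M Z).det ≠ 0 := by
  intro h
  have h0 : act M Z = 0 := by
    rw [act_eq, Matrix.nonsing_inv_apply_not_isUnit _ (by simp [h]), mul_zero]
  exact zero_not_hhat (h0 ▸ hM Z hZ)

lemma map_addR (X Y : Mat2R) : (X+Y).map Complex.ofReal = X.map Complex.ofReal + Y.map Complex.ofReal := by
  ext i j; simp

lemma map_mulR (X Y : Mat2R) : (X*Y).map Complex.ofReal = X.map Complex.ofReal * Y.map Complex.ofReal := by
  ext i j; simp [Matrix.mul_apply]

lemma blocks_mul (M N : Mat4) :
    bA (M*N) = bA M * bA N + bB M * bC N ∧ bB (M*N) = bA M * bB N + bB M * bD N ∧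
    bC (M*N) = bC M * bA N + bD M * bC N ∧ bD (M*N) = bC M * bB N + bD M * bD N := by
  have h : M * N = Matrix.fromBlocks
      (M.toBlocks₁₁ * N.toBlocks₁₁ + M.toBlocks₁₂ * N.toBlocks₂₁)
      (M.toBlocks₁₁ * N.toBlocks₁₂ + M.toBlocks₁₂ * N.toBlocks₂₂)
      (M.toBlocks₂₁ * N.toBlocks₁₁ + M.toBlocks₂₂ * N.toBlocks₂₁)
      (M.toBlocks₂₁ * N.toBlocks₁₂ + M.toBlocks₂₂ * N.toBlocks₂₂) := by
    conv_lhs => rw [← Matrix.fromBlocks_toBlocks M, ← Matrix.fromBlocks_toBlocks N]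
    rw [Matrix.fromBlocks_multiply]
  refine ⟨?_, ?_, ?_, ?_⟩ <;>
    simp [bA, bB, bC, bD, h, Matrix.toBlocks_fromBlocks₁₁, Matrix.toBlocks_fromBlocks₁₂,
      Matrix.toBlocks_fromBlocks₂₁, Matrix.toBlocks_fromBlocks₂₂, map_addR, map_mulR]

lemma num_den_mul (M N : Mat4) (Z : Mat2) (h : (den N Z).det ≠ 0) :
    num (M*N) Z = num M (act N Z) * den N Z ∧ den (M*N) Z = den M (act N Z) * den N Z := by
  obtain ⟨h1, h2, h3, h4⟩ := blocks_mul M N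
  have hinv : (den N Z)⁻¹ * den N Z = 1 :=
    Matrix.nonsing_inv_mul _ (isUnit_iff_ne_zero.2 h)
  have hnum : num N Z = act N Z * den N Z := by
    rw [act_eq, mul_assoc, hinv, mul_one]
  constructor
  · rw [num, h1, h2, act_eq]
    rw [num, den]  -- unfold on rhs? careful
    calc (bA M * bA N + bB M * bC N) * Z + (bA M * bB N + bB M * bD N)
        = bA M * (bA N * Z + bB N) + bB M * (bC N * Z + bD N) := by noncomm_ring
      _ = bA M * (act N Z * den N Z) + bB M * den N Z := by rw [← hnum]; rfl
      _ = (bA M * act N Z + bB M) * den N Z := by noncomm_ring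
  · rw [den, h3, h4]
    calc (bC M * bA N + bD M * bC N) * Z + (bC M * bB N + bD M * bD N)
        = bC M * (bA N * Z + bB N) + bD M * (bC N * Z + bD N) := by noncomm_ring
      _ = bC M * (act N Z * den N Z) + bD M * den N Z := by rw [← hnum]; rfl
      _ = (bC M * act N Z + bD M) * den N Z := by noncomm_ring

lemma act_mul (M N : Mat4) (Z : Mat2) (h1 : (den N Z).det ≠ 0)
    (_h2 : (den M (act N Z)).det ≠ 0) : act (M*N) Z = act M (act N Z) := by
  obtain ⟨hn, hd⟩ := num_den_mul M N Z h1
  have hinv : den N Z * (den N Z)⁻¹ = 1 :=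
    Matrix.mul_nonsing_inv _ (isUnit_iff_ne_zero.2 h1)
  rw [act_eq (M*N), hn, hd, Matrix.mul_inv_rev,
    mul_assoc, ← mul_assoc (den N Z), hinv, one_mul, ← act_eq]

-- Omega2 group structure
lemma J_sq : Jmat * Jmat = -1 := by
  rw [Jmat, Matrix.fromBlocks_multiply]
  have : (-1 : Mat4) = Matrix.fromBlocks (-1) 0 0 (-1) := by
    rw [← Matrix.fromBlocks_one, Matrix.fromBlocks_neg]; simp
  rw [this]; simp

lemma isUnit_det_J : IsUnit Jmat.det := by
  apply Matrix.isUnit_det_of_right_inverse (B := -Jmat)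
  rw [mul_neg, J_sq, neg_neg]

lemma Omega2.det_isUnit {M : Mat4} (hM : M ∈ Omega2) : IsUnit M.det := by
  have h := congrArg Matrix.det hM
  rw [Matrix.det_mul, Matrix.det_mul, Matrix.det_transpose] at h
  rcases _root_.isUnit_det_J with ⟨u, hu⟩
  have hdet : M.det * M.det = 1 := by
    have h2 : (M.det * M.det) * Jmat.det = 1 * Jmat.det := by rw [one_mul]; linarith [h]
    exact mul_right_cancel₀ (by rw [← hu]; exact u.ne_zero) h2
  exact IsUnit.of_mul_eq_one _ hdet

lemma Omega2.one_mem : (1 : Mat4) ∈ Omega2 := by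
  simp [Omega2]

lemma Omega2.mul_mem {M N : Mat4} (hM : M ∈ Omega2) (hN : N ∈ Omega2) : M * N ∈ Omega2 := by
  have : (M*N)ᵀ * Jmat * (M*N) = Nᵀ * (Mᵀ * Jmat * M) * N := by
    rw [Matrix.transpose_mul]; noncomm_ring
  rw [Omega2, Set.mem_setOf_eq, this, hM, hN]

lemma Omega2.inv_mem {M : Mat4} (hM : M ∈ Omega2) : M⁻¹ ∈ Omega2 := by
  have hu := Omega2.det_isUnit hM
  have h1 : M * M⁻¹ = 1 := Matrix.mul_nonsing_inv _ hu
  show (M⁻¹)ᵀ * Jmat * M⁻¹ = Jmat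
  calc (M⁻¹)ᵀ * Jmat * M⁻¹ = (M⁻¹)ᵀ * (Mᵀ * Jmat * M) * M⁻¹ := by rw [hM]
    _ = (M * M⁻¹)ᵀ * Jmat * (M * M⁻¹) := by rw [Matrix.transpose_mul]; noncomm_ring
    _ = Jmat := by rw [h1]; simp

-- q lemmas
lemma mat2_ext_iff {α : Type*} (a b c d e f g h : α) :
    (!![a,b;c,d] : Matrix (Fin 2) (Fin 2) α) = !![e,f;g,h] ↔ (a=e ∧ b=f ∧ c=g ∧ d=h) := by
  constructor
  · intro hh
    exact ⟨congrFun (congrFun hh 0) 0, congrFun (congrFun hh 0) 1,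
      congrFun (congrFun hh 1) 0, congrFun (congrFun hh 1) 1⟩
  · rintro ⟨h1, h2, h3, h4⟩; rw [h1, h2, h3, h4]

lemma mul_q (X : Mat2R) : X * qR = !![X 0 1, X 0 0; X 1 1, X 1 0] := by
  rw [qR, Matrix.eta_fin_two X, Matrix.mul_fin_two]; norm_num

lemma q_mul (X : Mat2R) : qR * X = !![X 1 0, X 1 1; X 0 0, X 0 1] := by
  rw [qR, Matrix.eta_fin_two X, Matrix.mul_fin_two]; norm_num

lemma comm_q_iff (X : Mat2R) : X * qR = qR * X ↔ (X 1 1 = X 0 0 ∧ X 1 0 = X 0 1) := by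
  rw [mul_q, q_mul, mat2_ext_iff]
  constructor
  · rintro ⟨h1, h2, h3, h4⟩; exact ⟨h2.symm, h1.symm⟩
  · rintro ⟨h1, h2⟩; exact ⟨h2.symm, h1.symm, h1, h2⟩

lemma anticomm_q_iff (X : Mat2R) : X * qR = -(qR * X) ↔ (X 1 1 = -X 0 0 ∧ X 1 0 = -X 0 1) := by
  rw [mul_q, q_mul]
  have : -(!![X 1 0, X 1 1; X 0 0, X 0 1]) = !![-X 1 0, -X 1 1; -X 0 0, -X 0 1] := by
    ext i j; fin_cases i <;> fin_cases j <;> simp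
  rw [this, mat2_ext_iff]
  constructor
  · rintro ⟨h1, h2, h3, h4⟩; exact ⟨by linarith, by linarith⟩
  · rintro ⟨h1, h2⟩; refine ⟨by linarith, by linarith, by linarith, by linarith⟩

lemma mulQ_eq (M : Mat4) : M * Qmat =
    Matrix.fromBlocks (M.toBlocks₁₁ * qR) (M.toBlocks₁₂ * qR)
      (M.toBlocks₂₁ * qR) (M.toBlocks₂₂ * qR) := by
  conv_lhs => rw [← Matrix.fromBlocks_toBlocks M]
  rw [Qmat, Matrix.fromBlocks_multiply]
  simp

lemma Qmul_eq (M : Mat4) : Qmat * M =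
    Matrix.fromBlocks (qR * M.toBlocks₁₁) (qR * M.toBlocks₁₂)
      (qR * M.toBlocks₂₁) (qR * M.toBlocks₂₂) := by
  conv_lhs => rw [← Matrix.fromBlocks_toBlocks M]
  rw [Qmat, Matrix.fromBlocks_multiply]
  simp

lemma fromBlocks_eq_iff {α : Type*} (A B C D A' B' C' D' : Matrix (Fin 2) (Fin 2) α) :
    Matrix.fromBlocks A B C D = Matrix.fromBlocks A' B' C' D' ↔
      (A = A' ∧ B = B' ∧ C = C' ∧ D = D') := by
  constructor
  · intro h
    exact ⟨by rw [← Matrix.toBlocks_fromBlocks₁₁ A B C D, h, Matrix.toBlocks_fromBlocks₁₁],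
      by rw [← Matrix.toBlocks_fromBlocks₁₂ A B C D, h, Matrix.toBlocks_fromBlocks₁₂],
      by rw [← Matrix.toBlocks_fromBlocks₂₁ A B C D, h, Matrix.toBlocks_fromBlocks₂₁],
      by rw [← Matrix.toBlocks_fromBlocks₂₂ A B C D, h, Matrix.toBlocks_fromBlocks₂₂]⟩
  · rintro ⟨h1, h2, h3, h4⟩; rw [h1, h2, h3, h4]

lemma commQ_iff (M : Mat4) : M * Qmat = Qmat * M ↔
    (M.toBlocks₁₁ * qR = qR * M.toBlocks₁₁ ∧ M.toBlocks₁₂ * qR = qR * M.toBlocks₁₂ ∧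
     M.toBlocks₂₁ * qR = qR * M.toBlocks₂₁ ∧ M.toBlocks₂₂ * qR = qR * M.toBlocks₂₂) := by
  rw [mulQ_eq, Qmul_eq, fromBlocks_eq_iff]

lemma anticommQ_iff (M : Mat4) : M * Qmat = -(Qmat * M) ↔
    (M.toBlocks₁₁ * qR = -(qR * M.toBlocks₁₁) ∧ M.toBlocks₁₂ * qR = -(qR * M.toBlocks₁₂) ∧
     M.toBlocks₂₁ * qR = -(qR * M.toBlocks₂₁) ∧ M.toBlocks₂₂ * qR = -(qR * M.toBlocks₂₂)) := by
  rw [mulQ_eq, Qmul_eq, Matrix.fromBlocks_neg, fromBlocks_eq_iff]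

-- symplectic block identity
lemma sympl_block {M : Mat4} (hM : M ∈ Omega2) :
    (M.toBlocks₁₁)ᵀ * M.toBlocks₂₂ - (M.toBlocks₂₁)ᵀ * M.toBlocks₁₂ = 1 := by
  have e : (Matrix.fromBlocks M.toBlocks₁₁ M.toBlocks₁₂ M.toBlocks₂₁ M.toBlocks₂₂)ᵀ * Jmat *
      (Matrix.fromBlocks M.toBlocks₁₁ M.toBlocks₁₂ M.toBlocks₂₁ M.toBlocks₂₂) = Jmat := by
    rw [Matrix.fromBlocks_toBlocks]; exact hM
  rw [Jmat, Matrix.fromBlocks_transpose, Matrix.fromBlocks_multiply,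
    Matrix.fromBlocks_multiply] at e
  have h2 := congrArg Matrix.toBlocks₁₂ e
  rw [Matrix.toBlocks_fromBlocks₁₂, Matrix.toBlocks_fromBlocks₁₂] at h2
  simp at h2
  rw [← h2]; noncomm_ring

-- Moebius lemmas
lemma mob_denom_ne (a b c d : ℝ) (h : a*d - b*c = 1) (t : ℂ) (ht : 0 < t.im) :
    (c*t + d : ℂ) ≠ 0 := by
  intro h0
  have him : c * t.im = 0 := by
    have := congrArg Complex.im h0
    simpa using this
  have hc : c = 0 := by
    rcases mul_eq_zero.1 him with h' | h'
    · exact h'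
    · linarith
  rw [hc] at h0
  have hd : d = 0 := by exact_mod_cast by simpa using h0
  rw [hc, hd] at h; norm_num at h

lemma mob_im_pos (a b c d : ℝ) (h : a*d - b*c = 1) (t : ℂ) (ht : 0 < t.im) :
    0 < ((a*t + b) / (c*t + d) : ℂ).im := by
  have hne := mob_denom_ne a b c d h t ht
  rw [Complex.div_im]
  have hnum : (a*t + b : ℂ).im * (c*t + d : ℂ).re - (a*t + b : ℂ).re * (c*t + d : ℂ).im
      = t.im := by
    simp only [Complex.add_im, Complex.add_re, Complex.mul_im, Complex.mul_re,
      Complex.ofReal_re, Complex.ofReal_im]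
    linear_combination t.im * h
  rw [div_sub_div_same, hnum]
  exact div_pos ht (Complex.normSq_pos.2 hne)

-- entry extraction helper
lemma entry_eq {n : ℕ} {α : Type*} {X Y : Matrix (Fin n) (Fin n) α} (h : X = Y) (i j : Fin n) :
    X i j = Y i j := by rw [h]

lemma half_im (x : ℂ) : (x/2).im = x.im/2 := by
  have h : (x/2) = x * ((1/2 : ℝ) : ℂ) := by push_cast; ring
  rw [h, Complex.mul_im]
  simp
  ring

lemma mat2_add {α : Type*} [Add α] (a b c d e f g h : α) :
    (!![a,b;c,d] : Matrix (Fin 2) (Fin 2) α) + !![e,f;g,h] = !![a+e, b+f; c+g, d+h] := by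
  ext i j; fin_cases i <;> fin_cases j <;> simp

lemma core_comm (a a' b b' c c' d d' : ℝ) (τ z : ℂ)
    (hs1 : (a+a')*(d+d') - (b+b')*(c+c') = 1)
    (hs2 : (a-a')*(d-d') - (b-b')*(c-c') = 1)
    (ht : |z.im| < τ.im) :
    ∃ w v : ℂ,
      (!![(a:ℂ),a';a',a] * !![τ,z;z,τ] + !![(b:ℂ),b';b',b]) =
        !![w,v;v,w] * (!![(c:ℂ),c';c',c] * !![τ,z;z,τ] + !![(d:ℂ),d';d',d]) ∧
      (!![(c:ℂ),c';c',c] * !![τ,z;z,τ] + !![(d:ℂ),d';d',d]).det ≠ 0 ∧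
      |v.im| < w.im := by
  have ht1 : 0 < (τ + z).im := by
    rw [Complex.add_im]; have := abs_lt.1 ht; linarith
  have ht2 : 0 < (τ - z).im := by
    rw [Complex.sub_im]; have := abs_lt.1 ht; linarith
  have him1 := mob_im_pos _ _ _ _ hs1 _ ht1
  have him2 := mob_im_pos _ _ _ _ hs2 _ ht2
  have hden1 := mob_denom_ne _ _ _ _ hs1 _ ht1
  have hden2 := mob_denom_ne _ _ _ _ hs2 _ ht2
  have k₁ : ((((a+a') : ℝ) : ℂ)*(τ+z) + (((b+b') : ℝ) : ℂ)) /
        ((((c+c') : ℝ) : ℂ)*(τ+z) + (((d+d') : ℝ) : ℂ)) *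
        ((((c+c') : ℝ) : ℂ)*(τ+z) + (((d+d') : ℝ) : ℂ))
      = (((a+a') : ℝ) : ℂ)*(τ+z) + (((b+b') : ℝ) : ℂ) := div_mul_cancel₀ _ hden1
  have k₂ : ((((a-a') : ℝ) : ℂ)*(τ-z) + (((b-b') : ℝ) : ℂ)) /
        ((((c-c') : ℝ) : ℂ)*(τ-z) + (((d-d') : ℝ) : ℂ)) *
        ((((c-c') : ℝ) : ℂ)*(τ-z) + (((d-d') : ℝ) : ℂ))
      = (((a-a') : ℝ) : ℂ)*(τ-z) + (((b-b') : ℝ) : ℂ) := div_mul_cancel₀ _ hden2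
  obtain ⟨w₁, hw₁⟩ : ∃ x : ℂ, ((((a+a') : ℝ) : ℂ)*(τ+z) + (((b+b') : ℝ) : ℂ)) /
        ((((c+c') : ℝ) : ℂ)*(τ+z) + (((d+d') : ℝ) : ℂ)) = x := ⟨_, rfl⟩
  obtain ⟨w₂, hw₂⟩ : ∃ x : ℂ, ((((a-a') : ℝ) : ℂ)*(τ-z) + (((b-b') : ℝ) : ℂ)) /
        ((((c-c') : ℝ) : ℂ)*(τ-z) + (((d-d') : ℝ) : ℂ)) = x := ⟨_, rfl⟩
  rw [hw₁] at k₁ him1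
  rw [hw₂] at k₂ him2
  push_cast at k₁ k₂
  refine ⟨w₁/2 + w₂/2, w₁/2 - w₂/2, ?_, ?_, ?_⟩
  · rw [Matrix.mul_fin_two, mat2_add, Matrix.mul_fin_two, mat2_add, Matrix.mul_fin_two,
      mat2_ext_iff]
    refine ⟨?_, ?_, ?_, ?_⟩ <;>
      · push_cast
        first
        | linear_combination (-1/2 : ℂ) * k₁ + (-1/2 : ℂ) * k₂
        | linear_combination (-1/2 : ℂ) * k₁ + (1/2 : ℂ) * k₂
  · rw [Matrix.mul_fin_two, mat2_add, Matrix.det_fin_two_of]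
    intro h0
    apply mul_ne_zero hden1 hden2
    push_cast at h0 ⊢
    linear_combination h0
  · rw [Complex.sub_im, Complex.add_im, half_im, half_im]
    rw [abs_lt]
    constructor <;> linarith

lemma preserve_of_comm {M : Mat4} (hM : M ∈ Omega2) (hc : M * Qmat = Qmat * M) :
    ∀ Z ∈ Hhat, (den M Z).det ≠ 0 ∧ act M Z ∈ Hhat := by
  intro Z hZ
  obtain ⟨hcA, hcB, hcC, hcD⟩ := (commQ_iff M).1 hc
  obtain ⟨hA1, hA2⟩ := (comm_q_iff _).1 hcA
  obtain ⟨hB1, hB2⟩ := (comm_q_iff _).1 hcB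
  obtain ⟨hC1, hC2⟩ := (comm_q_iff _).1 hcC
  obtain ⟨hD1, hD2⟩ := (comm_q_iff _).1 hcD
  obtain ⟨hZ1, hZ2, hZ3⟩ := hZ
  have hAc : bA M = !![(M.toBlocks₁₁ 0 0 : ℂ), (M.toBlocks₁₁ 0 1 : ℂ);
      (M.toBlocks₁₁ 0 1 : ℂ), (M.toBlocks₁₁ 0 0 : ℂ)] := by
    ext i j; fin_cases i <;> fin_cases j <;> simp [bA, hA1, hA2]
  have hBc : bB M = !![(M.toBlocks₁₂ 0 0 : ℂ), (M.toBlocks₁₂ 0 1 : ℂ);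
      (M.toBlocks₁₂ 0 1 : ℂ), (M.toBlocks₁₂ 0 0 : ℂ)] := by
    ext i j; fin_cases i <;> fin_cases j <;> simp [bB, hB1, hB2]
  have hCc : bC M = !![(M.toBlocks₂₁ 0 0 : ℂ), (M.toBlocks₂₁ 0 1 : ℂ);
      (M.toBlocks₂₁ 0 1 : ℂ), (M.toBlocks₂₁ 0 0 : ℂ)] := by
    ext i j; fin_cases i <;> fin_cases j <;> simp [bC, hC1, hC2]
  have hDc : bD M = !![(M.toBlocks₂₂ 0 0 : ℂ), (M.toBlocks₂₂ 0 1 : ℂ);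
      (M.toBlocks₂₂ 0 1 : ℂ), (M.toBlocks₂₂ 0 0 : ℂ)] := by
    ext i j; fin_cases i <;> fin_cases j <;> simp [bD, hD1, hD2]
  have hZc : Z = !![Z 0 0, Z 0 1; Z 0 1, Z 0 0] := by
    ext i j; fin_cases i <;> fin_cases j <;> simp [hZ1, hZ2]
  -- symplectic scalar relations
  have s := sympl_block hM
  have s00 := entry_eq s 0 0
  have s01 := entry_eq s 0 1
  simp only [Matrix.sub_apply, Matrix.mul_apply, Fin.sum_univ_two, Matrix.transpose_apply,
    Matrix.one_apply, if_true, if_false, eq_self_iff_true] at s00 s01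
  norm_num at s00 s01
  simp only [hA1, hA2, hB1, hB2, hC1, hC2, hD1, hD2] at s00 s01
  have hs1 : (M.toBlocks₁₁ 0 0 + M.toBlocks₁₁ 0 1) * (M.toBlocks₂₂ 0 0 + M.toBlocks₂₂ 0 1)
      - (M.toBlocks₁₂ 0 0 + M.toBlocks₁₂ 0 1) * (M.toBlocks₂₁ 0 0 + M.toBlocks₂₁ 0 1) = 1 := by
    linear_combination s00 + s01
  have hs2 : (M.toBlocks₁₁ 0 0 - M.toBlocks₁₁ 0 1) * (M.toBlocks₂₂ 0 0 - M.toBlocks₂₂ 0 1)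
      - (M.toBlocks₁₂ 0 0 - M.toBlocks₁₂ 0 1) * (M.toBlocks₂₁ 0 0 - M.toBlocks₂₁ 0 1) = 1 := by
    linear_combination s00 - s01
  obtain ⟨w, v, hkey, hdet, him⟩ := core_comm (M.toBlocks₁₁ 0 0) (M.toBlocks₁₁ 0 1)
    (M.toBlocks₁₂ 0 0) (M.toBlocks₁₂ 0 1) (M.toBlocks₂₁ 0 0) (M.toBlocks₂₁ 0 1)
    (M.toBlocks₂₂ 0 0) (M.toBlocks₂₂ 0 1) (Z 0 0) (Z 0 1) hs1 hs2 hZ3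
  have hden : den M Z = !![(M.toBlocks₂₁ 0 0 : ℂ), (M.toBlocks₂₁ 0 1 : ℂ);
        (M.toBlocks₂₁ 0 1 : ℂ), (M.toBlocks₂₁ 0 0 : ℂ)] * !![Z 0 0, Z 0 1; Z 0 1, Z 0 0] +
      !![(M.toBlocks₂₂ 0 0 : ℂ), (M.toBlocks₂₂ 0 1 : ℂ);
        (M.toBlocks₂₂ 0 1 : ℂ), (M.toBlocks₂₂ 0 0 : ℂ)] := by
    rw [den, hCc, hDc]; conv_lhs => rw [hZc]
  have hnum : num M Z = !![(M.toBlocks₁₁ 0 0 : ℂ), (M.toBlocks₁₁ 0 1 : ℂ);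
        (M.toBlocks₁₁ 0 1 : ℂ), (M.toBlocks₁₁ 0 0 : ℂ)] * !![Z 0 0, Z 0 1; Z 0 1, Z 0 0] +
      !![(M.toBlocks₁₂ 0 0 : ℂ), (M.toBlocks₁₂ 0 1 : ℂ);
        (M.toBlocks₁₂ 0 1 : ℂ), (M.toBlocks₁₂ 0 0 : ℂ)] := by
    rw [num, hAc, hBc]; conv_lhs => rw [hZc]
  have hdet' : (den M Z).det ≠ 0 := by rw [hden]; exact hdet
  refine ⟨hdet', ?_⟩
  have hact : act M Z = !![w, v; v, w] := by
    rw [act_eq, hnum, hden, hkey, mul_assoc,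
      Matrix.mul_nonsing_inv _ (isUnit_iff_ne_zero.2 hdet), mul_one]
  rw [hact]
  exact ⟨by simp, by simp, by simpa using him⟩

def kR : Mat2R := !![1, 0; 0, -1]
def Kmat : Mat4 := Matrix.fromBlocks kR 0 0 kR

lemma kR_sq : kR * kR = 1 := by
  rw [kR, Matrix.mul_fin_two]; norm_num [← Matrix.one_fin_two]

lemma kq_anti : kR * qR = -(qR * kR) := by
  rw [kR, qR, Matrix.mul_fin_two, Matrix.mul_fin_two]
  ext i j; fin_cases i <;> fin_cases j <;> norm_num

lemma kR_transpose : kRᵀ = kR := by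
  rw [kR]; ext i j; fin_cases i <;> fin_cases j <;> simp [Matrix.transpose_apply]

lemma Kmat_transpose : Kmatᵀ = Kmat := by
  rw [Kmat, Matrix.fromBlocks_transpose, kR_transpose]
  congr 1 <;> simp

lemma Kmat_mem : Kmat ∈ Omega2 := by
  show Kmatᵀ * Jmat * Kmat = Jmat
  rw [Kmat_transpose, Kmat, Jmat, Matrix.fromBlocks_multiply, Matrix.fromBlocks_multiply]
  simp [kR_sq]

lemma Kmat_sq : Kmat * Kmat = 1 := by
  rw [Kmat, Matrix.fromBlocks_multiply]
  simp [kR_sq, ← Matrix.fromBlocks_one]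

lemma KQ_anti : Kmat * Qmat = -(Qmat * Kmat) := by
  rw [Kmat, Qmat, Matrix.fromBlocks_multiply, Matrix.fromBlocks_multiply,
    Matrix.fromBlocks_neg]
  simp [kq_anti]

lemma MK_comm {M : Mat4} (hanti : M * Qmat = -(Qmat * M)) :
    (M * Kmat) * Qmat = Qmat * (M * Kmat) := by
  calc (M * Kmat) * Qmat = M * (Kmat * Qmat) := by rw [mul_assoc]
    _ = M * (-(Qmat * Kmat)) := by rw [KQ_anti]
    _ = -(M * Qmat) * Kmat := by noncomm_ring
    _ = -(-(Qmat * M)) * Kmat := by rw [hanti]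
    _ = Qmat * (M * Kmat) := by noncomm_ring

lemma bKmat : bA Kmat = !![1,0;0,-1] ∧ bB Kmat = 0 ∧ bC Kmat = 0 ∧ bD Kmat = !![1,0;0,-1] := by
  refine ⟨?_, ?_, ?_, ?_⟩ <;>
    · first
      | (show (Matrix.toBlocks₁₁ Kmat).map _ = _ ; rw [Kmat, Matrix.toBlocks_fromBlocks₁₁])
      | (show (Matrix.toBlocks₁₂ Kmat).map _ = _ ; rw [Kmat, Matrix.toBlocks_fromBlocks₁₂])
      | (show (Matrix.toBlocks₂₁ Kmat).map _ = _ ; rw [Kmat, Matrix.toBlocks_fromBlocks₂₁])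
      | (show (Matrix.toBlocks₂₂ Kmat).map _ = _ ; rw [Kmat, Matrix.toBlocks_fromBlocks₂₂])
      ext i j <;> fin_cases i <;> fin_cases j <;> simp [kR]

lemma kC_sq : (!![1,0;0,-1] : Mat2) * !![1,0;0,-1] = 1 := by
  rw [Matrix.mul_fin_two]; norm_num [← Matrix.one_fin_two]

lemma act_K (Z : Mat2) : act Kmat Z = !![1,0;0,-1] * Z * !![1,0;0,-1] := by
  obtain ⟨h1, h2, h3, h4⟩ := bKmat
  rw [act, show Kmat.toBlocks₁₁.map Complex.ofReal = bA Kmat from rfl,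
    show Kmat.toBlocks₁₂.map Complex.ofReal = bB Kmat from rfl,
    show Kmat.toBlocks₂₁.map Complex.ofReal = bC Kmat from rfl,
    show Kmat.toBlocks₂₂.map Complex.ofReal = bD Kmat from rfl, h1, h2, h3, h4]
  rw [zero_mul, zero_add, add_zero, Matrix.inv_eq_right_inv kC_sq]

lemma den_K_det (Z : Mat2) : (den Kmat Z).det ≠ 0 := by
  obtain ⟨h1, h2, h3, h4⟩ := bKmat
  rw [den, h3, h4, zero_mul, zero_add, Matrix.det_fin_two_of]
  norm_num

lemma actK_mem {Z : Mat2} (hZ : Z ∈ Hhat) : act Kmat Z ∈ Hhat := by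
  obtain ⟨h1, h2, h3⟩ := hZ
  rw [act_K]
  have he : (!![1,0;0,-1] : Mat2) * Z * !![1,0;0,-1] = !![Z 0 0, -Z 0 1; -Z 1 0, Z 1 1] := by
    rw [Matrix.eta_fin_two Z, Matrix.mul_fin_two, Matrix.mul_fin_two]
    norm_num
  rw [he]
  refine ⟨by simpa using h1, by simpa using h2, ?_⟩
  simpa using h3

lemma preserve_of_anti {M : Mat4} (hM : M ∈ Omega2) (hc : M * Qmat = -(Qmat * M)) :
    ∀ Z ∈ Hhat, act M Z ∈ Hhat := by
  intro Z hZ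
  have hMK : M * Kmat ∈ Omega2 := Omega2.mul_mem hM Kmat_mem
  have hcomm := MK_comm hc
  have hZ' : act Kmat Z ∈ Hhat := actK_mem hZ
  obtain ⟨hdet, hmem⟩ := preserve_of_comm hMK hcomm _ hZ'
  have : act ((M * Kmat) * Kmat) Z = act (M * Kmat) (act Kmat Z) :=
    act_mul _ _ _ (den_K_det Z) hdet
  rw [mul_assoc, Kmat_sq, mul_one] at this
  rw [this]
  exact hmem

lemma cancel_ne {x y : ℂ} (hx : x ≠ 0) (h : x * y = 0) : y = 0 :=
  (mul_eq_zero.1 h).resolve_left hx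

lemma endgame (A1 A2 A3 A4 B1 B2 B3 B4 C1 C2 C3 C4 D1 D2 D3 D4 : ℂ)
    (h1 : A2*C1 - A1*C2 = 0) (h2 : A3*C4 - A4*C3 = 0)
    (h3 : B2*D1 - B1*D2 = 0) (h4 : B3*D4 - B4*D3 = 0)
    (h5 : A2*D1 - B1*C2 = 0) (h6 : A1*D2 - B2*C1 = 0)
    (h7 : A3*D4 - B4*C3 = 0) (h8 : A4*D3 - B3*C4 = 0)
    (hp : A1*D1 + A3*D3 - B1*C1 - B3*C3 = 4)
    (hs : A2*D2 + A4*D4 - B2*C2 - B4*C4 = 4) :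
    (A2=0 ∧ A3=0 ∧ B2=0 ∧ B3=0 ∧ C2=0 ∧ C3=0 ∧ D2=0 ∧ D3=0) ∨
    (A1=0 ∧ A4=0 ∧ B1=0 ∧ B4=0 ∧ C1=0 ∧ C4=0 ∧ D1=0 ∧ D4=0) := by
  by_cases hd1 : A1*D1 - B1*C1 = 0
  · -- then A3*D3 - B3*C3 = 4 ≠ 0, so P4 = 0, then d4 = 0, so d2 = 4 ≠ 0, so P1 = 0
    have hd3 : A3*D3 - B3*C3 = 4 := by linear_combination hp - hd1
    have hd3' : A3*D3 - B3*C3 ≠ 0 := by rw [hd3]; norm_num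
    have zA4 : A4 = 0 := cancel_ne hd3' (by linear_combination B3*h2 + A3*h8)
    have zB4 : B4 = 0 := cancel_ne hd3' (by linear_combination (-1 : ℂ)*A3*h4 + B3*h7)
    have zC4 : C4 = 0 := cancel_ne hd3' (by linear_combination D3*h2 + C3*h8)
    have zD4 : D4 = 0 := cancel_ne hd3' (by linear_combination (-1 : ℂ)*C3*h4 + D3*h7)
    have hd2 : A2*D2 - B2*C2 = 4 := by
      rw [zA4, zB4, zC4, zD4] at hs; linear_combination hs
    have hd2' : A2*D2 - B2*C2 ≠ 0 := by rw [hd2]; norm_num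
    have zA1 : A1 = 0 := cancel_ne hd2' (by linear_combination B2*h1 + A2*h6)
    have zB1 : B1 = 0 := cancel_ne hd2' (by linear_combination (-1 : ℂ)*A2*h3 + B2*h5)
    have zC1 : C1 = 0 := cancel_ne hd2' (by linear_combination D2*h1 + C2*h6)
    have zD1 : D1 = 0 := cancel_ne hd2' (by linear_combination (-1 : ℂ)*C2*h3 + D2*h5)
    exact Or.inr ⟨zA1, zA4, zB1, zB4, zC1, zC4, zD1, zD4⟩
  · have zA2 : A2 = 0 := cancel_ne hd1 (by linear_combination (-1 : ℂ)*B1*h1 + A1*h5)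
    have zB2 : B2 = 0 := cancel_ne hd1 (by linear_combination A1*h3 + B1*h6)
    have zC2 : C2 = 0 := cancel_ne hd1 (by linear_combination (-1 : ℂ)*D1*h1 + C1*h5)
    have zD2 : D2 = 0 := cancel_ne hd1 (by linear_combination C1*h3 + D1*h6)
    have hd4 : A4*D4 - B4*C4 = 4 := by
      rw [zA2, zB2, zC2, zD2] at hs; linear_combination hs
    have hd4' : A4*D4 - B4*C4 ≠ 0 := by rw [hd4]; norm_num
    have zA3 : A3 = 0 := cancel_ne hd4' (by linear_combination (-1 : ℂ)*B4*h2 + A4*h7)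
    have zB3 : B3 = 0 := cancel_ne hd4' (by linear_combination A4*h4 + B4*h8)
    have zC3 : C3 = 0 := cancel_ne hd4' (by linear_combination (-1 : ℂ)*D4*h2 + C4*h7)
    have zD3 : D3 = 0 := cancel_ne hd4' (by linear_combination C4*h4 + D4*h8)
    exact Or.inl ⟨zA2, zA3, zB2, zB3, zC2, zC3, zD2, zD3⟩

lemma key_eqs (a0 a1 a2 a3 b0 b1 b2 b3 c0 c1 c2 c3 d0 d1 d2 d3 t z : ℂ)
    (hd : (!![c0,c1;c2,c3] * !![t,z;z,t] + !![d0,d1;d2,d3]).det ≠ 0)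
    (hW : (!![a0,a1;a2,a3] * !![t,z;z,t] + !![b0,b1;b2,b3]) *
      (!![c0,c1;c2,c3] * !![t,z;z,t] + !![d0,d1;d2,d3])⁻¹ ∈ Hhat) :
    ((a2*t+a3*z+b2)*(-(c0*z+c1*t+d1)) + (a2*z+a3*t+b3)*(c0*t+c1*z+d0)) = ((a0*t+a1*z+b0)*(c2*z+c3*t+d3) + (a0*z+a1*t+b1)*(-(c2*t+c3*z+d2))) ∧ ((a2*t+a3*z+b2)*(c2*z+c3*t+d3) + (a2*z+a3*t+b3)*(-(c2*t+c3*z+d2))) = ((a0*t+a1*z+b0)*(-(c0*z+c1*t+d1)) + (a0*z+a1*t+b1)*(c0*t+c1*z+d0)) := by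
  have hE : (!![c0,c1;c2,c3] * !![t,z;z,t] + !![d0,d1;d2,d3] : Mat2)
      = !![(c0*t+c1*z+d0),(c0*z+c1*t+d1);(c2*t+c3*z+d2),(c2*z+c3*t+d3)] := by
    rw [Matrix.mul_fin_two, mat2_add]
  have hN : (!![a0,a1;a2,a3] * !![t,z;z,t] + !![b0,b1;b2,b3] : Mat2)
      = !![(a0*t+a1*z+b0),(a0*z+a1*t+b1);(a2*t+a3*z+b2),(a2*z+a3*t+b3)] := by
    rw [Matrix.mul_fin_two, mat2_add]
  have hF : (!![a0,a1;a2,a3] * !![t,z;z,t] + !![b0,b1;b2,b3] : Mat2) *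
      (!![c0,c1;c2,c3] * !![t,z;z,t] + !![d0,d1;d2,d3] : Mat2).adjugate
      = !![((a0*t+a1*z+b0)*(c2*z+c3*t+d3) + (a0*z+a1*t+b1)*(-(c2*t+c3*z+d2))),((a0*t+a1*z+b0)*(-(c0*z+c1*t+d1)) + (a0*z+a1*t+b1)*(c0*t+c1*z+d0));((a2*t+a3*z+b2)*(c2*z+c3*t+d3) + (a2*z+a3*t+b3)*(-(c2*t+c3*z+d2))),((a2*t+a3*z+b2)*(-(c0*z+c1*t+d1)) + (a2*z+a3*t+b3)*(c0*t+c1*z+d0))] := by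
    rw [hN, hE, Matrix.adjugate_fin_two_of, Matrix.mul_fin_two]
  have hrepr : (!![a0,a1;a2,a3] * !![t,z;z,t] + !![b0,b1;b2,b3] : Mat2) *
      (!![c0,c1;c2,c3] * !![t,z;z,t] + !![d0,d1;d2,d3])⁻¹
      = ((!![c0,c1;c2,c3] * !![t,z;z,t] + !![d0,d1;d2,d3] : Mat2).det)⁻¹ •
        ((!![a0,a1;a2,a3] * !![t,z;z,t] + !![b0,b1;b2,b3] : Mat2) *
          (!![c0,c1;c2,c3] * !![t,z;z,t] + !![d0,d1;d2,d3] : Mat2).adjugate) := by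
    rw [Matrix.inv_def, Ring.inverse_eq_inv', Matrix.mul_smul]
  obtain ⟨p1, p2, _⟩ := hW
  rw [hrepr, hF] at p1 p2
  simp only [Matrix.smul_apply, smul_eq_mul, Matrix.cons_val', Matrix.cons_val_zero,
    Matrix.cons_val_one, Matrix.head_cons, Matrix.head_fin_const, Matrix.empty_val',
    Matrix.cons_val_fin_one] at p1 p2
  exact ⟨mul_left_cancel₀ (inv_ne_zero hd) p1, mul_left_cancel₀ (inv_ne_zero hd) p2⟩

lemma bA_eta (M : Mat4) : M.toBlocks₁₁.map Complex.ofReal =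
    !![(M.toBlocks₁₁ 0 0 : ℂ), (M.toBlocks₁₁ 0 1 : ℂ);
       (M.toBlocks₁₁ 1 0 : ℂ), (M.toBlocks₁₁ 1 1 : ℂ)] := by
  ext i j; fin_cases i <;> fin_cases j <;> simp
lemma bB_eta (M : Mat4) : M.toBlocks₁₂.map Complex.ofReal =
    !![(M.toBlocks₁₂ 0 0 : ℂ), (M.toBlocks₁₂ 0 1 : ℂ);
       (M.toBlocks₁₂ 1 0 : ℂ), (M.toBlocks₁₂ 1 1 : ℂ)] := by
  ext i j; fin_cases i <;> fin_cases j <;> simp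
lemma bC_eta (M : Mat4) : M.toBlocks₂₁.map Complex.ofReal =
    !![(M.toBlocks₂₁ 0 0 : ℂ), (M.toBlocks₂₁ 0 1 : ℂ);
       (M.toBlocks₂₁ 1 0 : ℂ), (M.toBlocks₂₁ 1 1 : ℂ)] := by
  ext i j; fin_cases i <;> fin_cases j <;> simp
lemma bD_eta (M : Mat4) : M.toBlocks₂₂.map Complex.ofReal =
    !![(M.toBlocks₂₂ 0 0 : ℂ), (M.toBlocks₂₂ 0 1 : ℂ);
       (M.toBlocks₂₂ 1 0 : ℂ), (M.toBlocks₂₂ 1 1 : ℂ)] := by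
  ext i j; fin_cases i <;> fin_cases j <;> simp

lemma grid_mem (j k : ℝ) (h : |k| < j) :
    (!![((j:ℝ):ℂ)*Complex.I, ((k:ℝ):ℂ)*Complex.I;
        ((k:ℝ):ℂ)*Complex.I, ((j:ℝ):ℂ)*Complex.I] : Mat2) ∈ Hhat := by
  refine ⟨by simp, by simp, ?_⟩
  simpa using h

set_option maxHeartbeats 3200000 in
lemma comm_of_preserve {M : Mat4} (hM : M ∈ Omega2) (hP : ∀ Z ∈ Hhat, act M Z ∈ Hhat) :
    M * Qmat = Qmat * M ∨ M * Qmat = -(Qmat * M) := by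
  obtain ⟨a0, ha0⟩ : ∃ x, M.toBlocks₁₁ 0 0 = x := ⟨_, rfl⟩
  obtain ⟨a1, ha1⟩ : ∃ x, M.toBlocks₁₁ 0 1 = x := ⟨_, rfl⟩
  obtain ⟨a2, ha2⟩ : ∃ x, M.toBlocks₁₁ 1 0 = x := ⟨_, rfl⟩
  obtain ⟨a3, ha3⟩ : ∃ x, M.toBlocks₁₁ 1 1 = x := ⟨_, rfl⟩
  obtain ⟨b0, hb0⟩ : ∃ x, M.toBlocks₁₂ 0 0 = x := ⟨_, rfl⟩
  obtain ⟨b1, hb1⟩ : ∃ x, M.toBlocks₁₂ 0 1 = x := ⟨_, rfl⟩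
  obtain ⟨b2, hb2⟩ : ∃ x, M.toBlocks₁₂ 1 0 = x := ⟨_, rfl⟩
  obtain ⟨b3, hb3⟩ : ∃ x, M.toBlocks₁₂ 1 1 = x := ⟨_, rfl⟩
  obtain ⟨c0, hc0⟩ : ∃ x, M.toBlocks₂₁ 0 0 = x := ⟨_, rfl⟩
  obtain ⟨c1, hc1⟩ : ∃ x, M.toBlocks₂₁ 0 1 = x := ⟨_, rfl⟩
  obtain ⟨c2, hc2⟩ : ∃ x, M.toBlocks₂₁ 1 0 = x := ⟨_, rfl⟩
  obtain ⟨c3, hc3⟩ : ∃ x, M.toBlocks₂₁ 1 1 = x := ⟨_, rfl⟩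
  obtain ⟨d0, hd0⟩ : ∃ x, M.toBlocks₂₂ 0 0 = x := ⟨_, rfl⟩
  obtain ⟨d1, hd1⟩ : ∃ x, M.toBlocks₂₂ 0 1 = x := ⟨_, rfl⟩
  obtain ⟨d2, hd2⟩ : ∃ x, M.toBlocks₂₂ 1 0 = x := ⟨_, rfl⟩
  obtain ⟨d3, hd3⟩ : ∃ x, M.toBlocks₂₂ 1 1 = x := ⟨_, rfl⟩
  have hA := bA_eta M
  have hB := bB_eta M
  have hC := bC_eta M
  have hD := bD_eta M
  rw [ha0, ha1, ha2, ha3] at hA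
  rw [hb0, hb1, hb2, hb3] at hB
  rw [hc0, hc1, hc2, hc3] at hC
  rw [hd0, hd1, hd2, hd3] at hD
  have s := sympl_block hM
  have s00 := entry_eq s 0 0
  have s01 := entry_eq s 0 1
  have s10 := entry_eq s 1 0
  have s11 := entry_eq s 1 1
  simp only [Matrix.sub_apply, Matrix.mul_apply, Fin.sum_univ_two, Matrix.transpose_apply,
    Matrix.one_apply] at s00 s01 s10 s11
  norm_num at s00 s01 s10 s11
  simp only [ha0, ha1, ha2, ha3, hb0, hb1, hb2, hb3, hc0, hc1, hc2, hc3, hd0, hd1, hd2, hd3] at s00 s01 s10 s11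
  have ts00 : a0*d0 + a2*d2 - (c0*b0 + c2*b2) = 1 := by linear_combination s00
  have cs00 := congrArg Complex.ofReal ts00
  push_cast at cs00
  have ts01 : a0*d1 + a2*d3 - (c0*b1 + c2*b3) = 0 := by linear_combination s01
  have cs01 := congrArg Complex.ofReal ts01
  push_cast at cs01
  have ts10 : a1*d0 + a3*d2 - (c1*b0 + c3*b2) = 0 := by linear_combination s10
  have cs10 := congrArg Complex.ofReal ts10
  push_cast at cs10
  have ts11 : a1*d1 + a3*d3 - (c1*b1 + c3*b3) = 1 := by linear_combination s11
  have cs11 := congrArg Complex.ofReal ts11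
  push_cast at cs11
  have hm10 : _ ∈ Hhat := grid_mem 1 (0) (by rw [abs_lt]; constructor <;> norm_num)
  have hdet10 := det_den_ne hP hm10
  have hw10 := hP _ hm10
  simp only [den, bC, bD] at hdet10
  rw [hC, hD] at hdet10
  simp only [act] at hw10
  rw [hA, hB, hC, hD] at hw10
  obtain ⟨g1_10, g2_10⟩ := key_eqs _ _ _ _ _ _ _ _ _ _ _ _ _ _ _ _ _ _ hdet10 hw10
  push_cast at g1_10 g2_10
  have hm11 : _ ∈ Hhat := grid_mem 1 (1/4) (by rw [abs_lt]; constructor <;> norm_num)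
  have hdet11 := det_den_ne hP hm11
  have hw11 := hP _ hm11
  simp only [den, bC, bD] at hdet11
  rw [hC, hD] at hdet11
  simp only [act] at hw11
  rw [hA, hB, hC, hD] at hw11
  obtain ⟨g1_11, g2_11⟩ := key_eqs _ _ _ _ _ _ _ _ _ _ _ _ _ _ _ _ _ _ hdet11 hw11
  push_cast at g1_11 g2_11
  have hm12 : _ ∈ Hhat := grid_mem 1 (1/2) (by rw [abs_lt]; constructor <;> norm_num)
  have hdet12 := det_den_ne hP hm12
  have hw12 := hP _ hm12
  simp only [den, bC, bD] at hdet12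
  rw [hC, hD] at hdet12
  simp only [act] at hw12
  rw [hA, hB, hC, hD] at hw12
  obtain ⟨g1_12, g2_12⟩ := key_eqs _ _ _ _ _ _ _ _ _ _ _ _ _ _ _ _ _ _ hdet12 hw12
  push_cast at g1_12 g2_12
  have hm20 : _ ∈ Hhat := grid_mem 2 (0) (by rw [abs_lt]; constructor <;> norm_num)
  have hdet20 := det_den_ne hP hm20
  have hw20 := hP _ hm20
  simp only [den, bC, bD] at hdet20
  rw [hC, hD] at hdet20
  simp only [act] at hw20
  rw [hA, hB, hC, hD] at hw20
  obtain ⟨g1_20, g2_20⟩ := key_eqs _ _ _ _ _ _ _ _ _ _ _ _ _ _ _ _ _ _ hdet20 hw20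
  push_cast at g1_20 g2_20
  have hm21 : _ ∈ Hhat := grid_mem 2 (1/4) (by rw [abs_lt]; constructor <;> norm_num)
  have hdet21 := det_den_ne hP hm21
  have hw21 := hP _ hm21
  simp only [den, bC, bD] at hdet21
  rw [hC, hD] at hdet21
  simp only [act] at hw21
  rw [hA, hB, hC, hD] at hw21
  obtain ⟨g1_21, g2_21⟩ := key_eqs _ _ _ _ _ _ _ _ _ _ _ _ _ _ _ _ _ _ hdet21 hw21
  push_cast at g1_21 g2_21
  have hm22 : _ ∈ Hhat := grid_mem 2 (1/2) (by rw [abs_lt]; constructor <;> norm_num)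
  have hdet22 := det_den_ne hP hm22
  have hw22 := hP _ hm22
  simp only [den, bC, bD] at hdet22
  rw [hC, hD] at hdet22
  simp only [act] at hw22
  rw [hA, hB, hC, hD] at hw22
  obtain ⟨g1_22, g2_22⟩ := key_eqs _ _ _ _ _ _ _ _ _ _ _ _ _ _ _ _ _ _ hdet22 hw22
  push_cast at g1_22 g2_22
  have hm30 : _ ∈ Hhat := grid_mem 3 (0) (by rw [abs_lt]; constructor <;> norm_num)
  have hdet30 := det_den_ne hP hm30
  have hw30 := hP _ hm30
  simp only [den, bC, bD] at hdet30
  rw [hC, hD] at hdet30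
  simp only [act] at hw30
  rw [hA, hB, hC, hD] at hw30
  obtain ⟨g1_30, g2_30⟩ := key_eqs _ _ _ _ _ _ _ _ _ _ _ _ _ _ _ _ _ _ hdet30 hw30
  push_cast at g1_30 g2_30
  have hm31 : _ ∈ Hhat := grid_mem 3 (1/4) (by rw [abs_lt]; constructor <;> norm_num)
  have hdet31 := det_den_ne hP hm31
  have hw31 := hP _ hm31
  simp only [den, bC, bD] at hdet31
  rw [hC, hD] at hdet31
  simp only [act] at hw31
  rw [hA, hB, hC, hD] at hw31
  obtain ⟨g1_31, g2_31⟩ := key_eqs _ _ _ _ _ _ _ _ _ _ _ _ _ _ _ _ _ _ hdet31 hw31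
  push_cast at g1_31 g2_31
  have hm32 : _ ∈ Hhat := grid_mem 3 (1/2) (by rw [abs_lt]; constructor <;> norm_num)
  have hdet32 := det_den_ne hP hm32
  have hw32 := hP _ hm32
  simp only [den, bC, bD] at hdet32
  rw [hC, hD] at hdet32
  simp only [act] at hw32
  rw [hA, hB, hC, hD] at hw32
  obtain ⟨g1_32, g2_32⟩ := key_eqs _ _ _ _ _ _ _ _ _ _ _ _ _ _ _ _ _ _ hdet32 hw32
  push_cast at g1_32 g2_32
  have hT1 : (((a0:ℝ):ℂ) - (a1:ℝ) + (a2:ℝ) - (a3:ℝ))*(((c0:ℝ):ℂ) + (c1:ℝ) + (c2:ℝ) + (c3:ℝ)) - (((a0:ℝ):ℂ) + (a1:ℝ) + (a2:ℝ) + (a3:ℝ))*(((c0:ℝ):ℂ) - (c1:ℝ) + (c2:ℝ) - (c3:ℝ)) = 0 := by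
    linear_combination ((-16/1 : ℂ)) * g1_10 + ((16/1 : ℂ)) * g2_10 + ((32/1 : ℂ)) * g1_11 + ((-32/1 : ℂ)) * g2_11 + ((-16/1 : ℂ)) * g1_12 + ((16/1 : ℂ)) * g2_12 + ((-2/1 : ℂ)*(↑a3 : ℂ)*(↑c2 : ℂ) + (-2/1 : ℂ)*(↑a3 : ℂ)*(↑c0 : ℂ) + (2/1 : ℂ)*(↑a2 : ℂ)*(↑c3 : ℂ) + (2/1 : ℂ)*(↑a2 : ℂ)*(↑c1 : ℂ) + (-2/1 : ℂ)*(↑a1 : ℂ)*(↑c2 : ℂ) + (-2/1 : ℂ)*(↑a1 : ℂ)*(↑c0 : ℂ) + (2/1 : ℂ)*(↑a0 : ℂ)*(↑c3 : ℂ) + (2/1 : ℂ)*(↑a0 : ℂ)*(↑c1 : ℂ)) * Complex.I_sq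
  have hT2 : (((a0:ℝ):ℂ) + (a1:ℝ) - (a2:ℝ) - (a3:ℝ))*(((c0:ℝ):ℂ) - (c1:ℝ) - (c2:ℝ) + (c3:ℝ)) - (((a0:ℝ):ℂ) - (a1:ℝ) - (a2:ℝ) + (a3:ℝ))*(((c0:ℝ):ℂ) + (c1:ℝ) - (c2:ℝ) - (c3:ℝ)) = 0 := by
    linear_combination ((-16/1 : ℂ)) * g1_10 + ((-16/1 : ℂ)) * g2_10 + ((32/1 : ℂ)) * g1_11 + ((32/1 : ℂ)) * g2_11 + ((-16/1 : ℂ)) * g1_12 + ((-16/1 : ℂ)) * g2_12 + ((2/1 : ℂ)*(↑a3 : ℂ)*(↑c2 : ℂ) + (-2/1 : ℂ)*(↑a3 : ℂ)*(↑c0 : ℂ) + (-2/1 : ℂ)*(↑a2 : ℂ)*(↑c3 : ℂ) + (2/1 : ℂ)*(↑a2 : ℂ)*(↑c1 : ℂ) + (-2/1 : ℂ)*(↑a1 : ℂ)*(↑c2 : ℂ) + (2/1 : ℂ)*(↑a1 : ℂ)*(↑c0 : ℂ) + (2/1 : ℂ)*(↑a0 : ℂ)*(↑c3 : ℂ) +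 (-2/1 : ℂ)*(↑a0 : ℂ)*(↑c1 : ℂ)) * Complex.I_sq
  have hT3 : (((b0:ℝ):ℂ) - (b1:ℝ) + (b2:ℝ) - (b3:ℝ))*(((d0:ℝ):ℂ) + (d1:ℝ) + (d2:ℝ) + (d3:ℝ)) - (((b0:ℝ):ℂ) + (b1:ℝ) + (b2:ℝ) + (b3:ℝ))*(((d0:ℝ):ℂ) - (d1:ℝ) + (d2:ℝ) - (d3:ℝ)) = 0 := by
    linear_combination ((28/1 : ℂ)) * g1_10 + ((-28/1 : ℂ)) * g2_10 + ((-64/1 : ℂ)) * g1_11 + ((64/1 : ℂ)) * g2_11 + ((32/1 : ℂ)) * g1_12 + ((-32/1 : ℂ)) * g2_12 + ((2/1 : ℂ)) * g1_20 + ((-2/1 : ℂ)) * g2_20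
  have hT4 : (((b0:ℝ):ℂ) + (b1:ℝ) - (b2:ℝ) - (b3:ℝ))*(((d0:ℝ):ℂ) - (d1:ℝ) - (d2:ℝ) + (d3:ℝ)) - (((b0:ℝ):ℂ) - (b1:ℝ) - (b2:ℝ) + (b3:ℝ))*(((d0:ℝ):ℂ) + (d1:ℝ) - (d2:ℝ) - (d3:ℝ)) = 0 := by
    linear_combination ((28/1 : ℂ)) * g1_10 + ((28/1 : ℂ)) * g2_10 + ((-64/1 : ℂ)) * g1_11 + ((-64/1 : ℂ)) * g2_11 + ((32/1 : ℂ)) * g1_12 + ((32/1 : ℂ)) * g2_12 + ((2/1 : ℂ)) * g1_20 + ((2/1 : ℂ)) * g2_20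
  have hT5 : (((a0:ℝ):ℂ) - (a1:ℝ) + (a2:ℝ) - (a3:ℝ))*(((d0:ℝ):ℂ) + (d1:ℝ) + (d2:ℝ) + (d3:ℝ)) - (((b0:ℝ):ℂ) + (b1:ℝ) + (b2:ℝ) + (b3:ℝ))*(((c0:ℝ):ℂ) - (c1:ℝ) + (c2:ℝ) - (c3:ℝ)) = 0 := by
    linear_combination ((29/1 : ℂ)*Complex.I) * g1_10 + ((-29/1 : ℂ)*Complex.I) * g2_10 + ((-56/1 : ℂ)*Complex.I) * g1_11 + ((56/1 : ℂ)*Complex.I) * g2_11 + ((26/1 : ℂ)*Complex.I) * g1_12 + ((-26/1 : ℂ)*Complex.I) * g2_12 + ((1/1 : ℂ)*Complex.I) * g1_20 + ((-1/1 : ℂ)*Complex.I) * g2_20 + ((1/1 : ℂ)*(↑b3 : ℂ)*(↑c3 : ℂ) + (-1/1 : ℂ)*(↑b3 : ℂ)*(↑c2 : ℂ) + (1/1 : ℂ)*(↑b3 : ℂ)*(↑c1 : ℂ) + (-1/1 : ℂ)*(↑b3 : ℂ)*(↑c0 : ℂ) + (1/1 : ℂ)*(↑b2 : ℂ)*(↑c3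 : ℂ) + (-1/1 : ℂ)*(↑b2 : ℂ)*(↑c2 : ℂ) + (1/1 : ℂ)*(↑b2 : ℂ)*(↑c1 : ℂ) + (-1/1 : ℂ)*(↑b2 : ℂ)*(↑c0 : ℂ) + (1/1 : ℂ)*(↑b1 : ℂ)*(↑c3 : ℂ) + (-1/1 : ℂ)*(↑b1 : ℂ)*(↑c2 : ℂ) + (1/1 : ℂ)*(↑b1 : ℂ)*(↑c1 : ℂ) + (-1/1 : ℂ)*(↑b1 : ℂ)*(↑c0 : ℂ) + (1/1 : ℂ)*(↑b0 : ℂ)*(↑c3 : ℂ) + (-1/1 : ℂ)*(↑b0 : ℂ)*(↑c2 : ℂ) + (1/1 : ℂ)*(↑b0 : ℂ)*(↑c1 : ℂ) + (-1/1 : ℂ)*(↑b0 : ℂ)*(↑c0 : ℂ) + (-1/1 : ℂ)*(↑a3 : ℂ)*(↑d3 : ℂ) + (-1/1 : ℂ)*(↑a3 : ℂ)*(↑d2 : ℂ) + (-1/1 : ℂ)*(↑a3 : ℂ)*(↑d1 : ℂ) + (-1/1 : ℂ)*(↑a3 : ℂ)*(↑d0 : ℂ) + (1/1 : ℂ)*(↑a2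 : ℂ)*(↑d3 : ℂ) + (1/1 : ℂ)*(↑a2 : ℂ)*(↑d2 : ℂ) + (1/1 : ℂ)*(↑a2 : ℂ)*(↑d1 : ℂ) + (1/1 : ℂ)*(↑a2 : ℂ)*(↑d0 : ℂ) + (-1/1 : ℂ)*(↑a1 : ℂ)*(↑d3 : ℂ) + (-1/1 : ℂ)*(↑a1 : ℂ)*(↑d2 : ℂ) + (-1/1 : ℂ)*(↑a1 : ℂ)*(↑d1 : ℂ) + (-1/1 : ℂ)*(↑a1 : ℂ)*(↑d0 : ℂ) + (1/1 : ℂ)*(↑a0 : ℂ)*(↑d3 : ℂ) + (1/1 : ℂ)*(↑a0 : ℂ)*(↑d2 : ℂ) + (1/1 : ℂ)*(↑a0 : ℂ)*(↑d1 : ℂ) + (1/1 : ℂ)*(↑a0 : ℂ)*(↑d0 : ℂ)) * Complex.I_sq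
  have hT6 : (((a0:ℝ):ℂ) + (a1:ℝ) + (a2:ℝ) + (a3:ℝ))*(((d0:ℝ):ℂ) - (d1:ℝ) + (d2:ℝ) - (d3:ℝ)) - (((b0:ℝ):ℂ) - (b1:ℝ) + (b2:ℝ) - (b3:ℝ))*(((c0:ℝ):ℂ) + (c1:ℝ) + (c2:ℝ) + (c3:ℝ)) = 0 := by
    linear_combination ((-17/1 : ℂ)*Complex.I) * g1_10 + ((17/1 : ℂ)*Complex.I) * g2_10 + ((40/1 : ℂ)*Complex.I) * g1_11 + ((-40/1 : ℂ)*Complex.I) * g2_11 + ((-22/1 : ℂ)*Complex.I) * g1_12 + ((22/1 : ℂ)*Complex.I) * g2_12 + ((-1/1 : ℂ)*Complex.I) * g1_20 + ((1/1 : ℂ)*Complex.I) * g2_20 + ((1/1 : ℂ)*(↑b3 : ℂ)*(↑c3 : ℂ) + (1/1 : ℂ)*(↑b3 : ℂ)*(↑c2 : ℂ) + (1/1 : ℂ)*(↑b3 : ℂ)*(↑c1 : ℂ) + (1/1 : ℂ)*(↑b3 : ℂ)*(↑c0 : ℂ) + (-1/1 : ℂ)*(↑b2 : ℂ)*(↑c3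 : ℂ) + (-1/1 : ℂ)*(↑b2 : ℂ)*(↑c2 : ℂ) + (-1/1 : ℂ)*(↑b2 : ℂ)*(↑c1 : ℂ) + (-1/1 : ℂ)*(↑b2 : ℂ)*(↑c0 : ℂ) + (1/1 : ℂ)*(↑b1 : ℂ)*(↑c3 : ℂ) + (1/1 : ℂ)*(↑b1 : ℂ)*(↑c2 : ℂ) + (1/1 : ℂ)*(↑b1 : ℂ)*(↑c1 : ℂ) + (1/1 : ℂ)*(↑b1 : ℂ)*(↑c0 : ℂ) + (-1/1 : ℂ)*(↑b0 : ℂ)*(↑c3 : ℂ) + (-1/1 : ℂ)*(↑b0 : ℂ)*(↑c2 : ℂ) + (-1/1 : ℂ)*(↑b0 : ℂ)*(↑c1 : ℂ) + (-1/1 : ℂ)*(↑b0 : ℂ)*(↑c0 : ℂ) + (-1/1 : ℂ)*(↑a3 : ℂ)*(↑d3 : ℂ) + (1/1 : ℂ)*(↑a3 : ℂ)*(↑d2 : ℂ) + (-1/1 : ℂ)*(↑a3 : ℂ)*(↑d1 : ℂ) + (1/1 : ℂ)*(↑a3 : ℂ)*(↑d0 : ℂ) + (-1/1 : ℂ)*(↑a2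 : ℂ)*(↑d3 : ℂ) + (1/1 : ℂ)*(↑a2 : ℂ)*(↑d2 : ℂ) + (-1/1 : ℂ)*(↑a2 : ℂ)*(↑d1 : ℂ) + (1/1 : ℂ)*(↑a2 : ℂ)*(↑d0 : ℂ) + (-1/1 : ℂ)*(↑a1 : ℂ)*(↑d3 : ℂ) + (1/1 : ℂ)*(↑a1 : ℂ)*(↑d2 : ℂ) + (-1/1 : ℂ)*(↑a1 : ℂ)*(↑d1 : ℂ) + (1/1 : ℂ)*(↑a1 : ℂ)*(↑d0 : ℂ) + (-1/1 : ℂ)*(↑a0 : ℂ)*(↑d3 : ℂ) + (1/1 : ℂ)*(↑a0 : ℂ)*(↑d2 : ℂ) + (-1/1 : ℂ)*(↑a0 : ℂ)*(↑d1 : ℂ) + (1/1 : ℂ)*(↑a0 : ℂ)*(↑d0 : ℂ)) * Complex.I_sq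
  have hT7 : (((a0:ℝ):ℂ) + (a1:ℝ) - (a2:ℝ) - (a3:ℝ))*(((d0:ℝ):ℂ) - (d1:ℝ) - (d2:ℝ) + (d3:ℝ)) - (((b0:ℝ):ℂ) - (b1:ℝ) - (b2:ℝ) + (b3:ℝ))*(((c0:ℝ):ℂ) + (c1:ℝ) - (c2:ℝ) - (c3:ℝ)) = 0 := by
    linear_combination ((17/1 : ℂ)*Complex.I) * g1_10 + ((17/1 : ℂ)*Complex.I) * g2_10 + ((-40/1 : ℂ)*Complex.I) * g1_11 + ((-40/1 : ℂ)*Complex.I) * g2_11 + ((22/1 : ℂ)*Complex.I) * g1_12 + ((22/1 : ℂ)*Complex.I) * g2_12 + ((1/1 : ℂ)*Complex.I) * g1_20 + ((1/1 : ℂ)*Complex.I) * g2_20 + ((1/1 : ℂ)*(↑b3 : ℂ)*(↑c3 : ℂ) + (1/1 : ℂ)*(↑b3 : ℂ)*(↑c2 : ℂ) + (-1/1 : ℂ)*(↑b3 : ℂ)*(↑c1 : ℂ) + (-1/1 : ℂ)*(↑b3 : ℂ)*(↑c0 : ℂ) + (-1/1 : ℂ)*(↑b2 : ℂ)*(↑c3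 : ℂ) + (-1/1 : ℂ)*(↑b2 : ℂ)*(↑c2 : ℂ) + (1/1 : ℂ)*(↑b2 : ℂ)*(↑c1 : ℂ) + (1/1 : ℂ)*(↑b2 : ℂ)*(↑c0 : ℂ) + (-1/1 : ℂ)*(↑b1 : ℂ)*(↑c3 : ℂ) + (-1/1 : ℂ)*(↑b1 : ℂ)*(↑c2 : ℂ) + (1/1 : ℂ)*(↑b1 : ℂ)*(↑c1 : ℂ) + (1/1 : ℂ)*(↑b1 : ℂ)*(↑c0 : ℂ) + (1/1 : ℂ)*(↑b0 : ℂ)*(↑c3 : ℂ) + (1/1 : ℂ)*(↑b0 : ℂ)*(↑c2 : ℂ) + (-1/1 : ℂ)*(↑b0 : ℂ)*(↑c1 : ℂ) + (-1/1 : ℂ)*(↑b0 : ℂ)*(↑c0 : ℂ) + (-1/1 : ℂ)*(↑a3 : ℂ)*(↑d3 : ℂ) + (1/1 : ℂ)*(↑a3 : ℂ)*(↑d2 : ℂ) + (1/1 : ℂ)*(↑a3 : ℂ)*(↑d1 : ℂ) + (-1/1 : ℂ)*(↑a3 : ℂ)*(↑d0 : ℂ) + (-1/1 : ℂ)*(↑a2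 : ℂ)*(↑d3 : ℂ) + (1/1 : ℂ)*(↑a2 : ℂ)*(↑d2 : ℂ) + (1/1 : ℂ)*(↑a2 : ℂ)*(↑d1 : ℂ) + (-1/1 : ℂ)*(↑a2 : ℂ)*(↑d0 : ℂ) + (1/1 : ℂ)*(↑a1 : ℂ)*(↑d3 : ℂ) + (-1/1 : ℂ)*(↑a1 : ℂ)*(↑d2 : ℂ) + (-1/1 : ℂ)*(↑a1 : ℂ)*(↑d1 : ℂ) + (1/1 : ℂ)*(↑a1 : ℂ)*(↑d0 : ℂ) + (1/1 : ℂ)*(↑a0 : ℂ)*(↑d3 : ℂ) + (-1/1 : ℂ)*(↑a0 : ℂ)*(↑d2 : ℂ) + (-1/1 : ℂ)*(↑a0 : ℂ)*(↑d1 : ℂ) + (1/1 : ℂ)*(↑a0 : ℂ)*(↑d0 : ℂ)) * Complex.I_sq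
  have hT8 : (((a0:ℝ):ℂ) - (a1:ℝ) - (a2:ℝ) + (a3:ℝ))*(((d0:ℝ):ℂ) + (d1:ℝ) - (d2:ℝ) - (d3:ℝ)) - (((b0:ℝ):ℂ) + (b1:ℝ) - (b2:ℝ) - (b3:ℝ))*(((c0:ℝ):ℂ) - (c1:ℝ) - (c2:ℝ) + (c3:ℝ)) = 0 := by
    linear_combination ((-29/1 : ℂ)*Complex.I) * g1_10 + ((-29/1 : ℂ)*Complex.I) * g2_10 + ((56/1 : ℂ)*Complex.I) * g1_11 + ((56/1 : ℂ)*Complex.I) * g2_11 + ((-26/1 : ℂ)*Complex.I) * g1_12 + ((-26/1 : ℂ)*Complex.I) * g2_12 + ((-1/1 : ℂ)*Complex.I) * g1_20 + ((-1/1 : ℂ)*Complex.I) * g2_20 + ((1/1 : ℂ)*(↑b3 : ℂ)*(↑c3 : ℂ) + (-1/1 : ℂ)*(↑b3 : ℂ)*(↑c2 : ℂ) + (-1/1 : ℂ)*(↑b3 : ℂ)*(↑c1 : ℂ) + (1/1 : ℂ)*(↑b3 : ℂ)*(↑c0 : ℂ) + (1/1 : ℂ)*(↑b2 : ℂ)*(↑c3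 : ℂ) + (-1/1 : ℂ)*(↑b2 : ℂ)*(↑c2 : ℂ) + (-1/1 : ℂ)*(↑b2 : ℂ)*(↑c1 : ℂ) + (1/1 : ℂ)*(↑b2 : ℂ)*(↑c0 : ℂ) + (-1/1 : ℂ)*(↑b1 : ℂ)*(↑c3 : ℂ) + (1/1 : ℂ)*(↑b1 : ℂ)*(↑c2 : ℂ) + (1/1 : ℂ)*(↑b1 : ℂ)*(↑c1 : ℂ) + (-1/1 : ℂ)*(↑b1 : ℂ)*(↑c0 : ℂ) + (-1/1 : ℂ)*(↑b0 : ℂ)*(↑c3 : ℂ) + (1/1 : ℂ)*(↑b0 : ℂ)*(↑c2 : ℂ) + (1/1 : ℂ)*(↑b0 : ℂ)*(↑c1 : ℂ) + (-1/1 : ℂ)*(↑b0 : ℂ)*(↑c0 : ℂ) + (-1/1 : ℂ)*(↑a3 : ℂ)*(↑d3 : ℂ) + (-1/1 : ℂ)*(↑a3 : ℂ)*(↑d2 : ℂ) + (1/1 : ℂ)*(↑a3 : ℂ)*(↑d1 : ℂ) + (1/1 : ℂ)*(↑a3 : ℂ)*(↑d0 : ℂ) + (1/1 : ℂ)*(↑a2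 : ℂ)*(↑d3 : ℂ) + (1/1 : ℂ)*(↑a2 : ℂ)*(↑d2 : ℂ) + (-1/1 : ℂ)*(↑a2 : ℂ)*(↑d1 : ℂ) + (-1/1 : ℂ)*(↑a2 : ℂ)*(↑d0 : ℂ) + (1/1 : ℂ)*(↑a1 : ℂ)*(↑d3 : ℂ) + (1/1 : ℂ)*(↑a1 : ℂ)*(↑d2 : ℂ) + (-1/1 : ℂ)*(↑a1 : ℂ)*(↑d1 : ℂ) + (-1/1 : ℂ)*(↑a1 : ℂ)*(↑d0 : ℂ) + (-1/1 : ℂ)*(↑a0 : ℂ)*(↑d3 : ℂ) + (-1/1 : ℂ)*(↑a0 : ℂ)*(↑d2 : ℂ) + (1/1 : ℂ)*(↑a0 : ℂ)*(↑d1 : ℂ) + (1/1 : ℂ)*(↑a0 : ℂ)*(↑d0 : ℂ)) * Complex.I_sq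
  have hTP : (((a0:ℝ):ℂ) + (a1:ℝ) + (a2:ℝ) + (a3:ℝ))*(((d0:ℝ):ℂ) + (d1:ℝ) + (d2:ℝ) + (d3:ℝ)) + (((a0:ℝ):ℂ) + (a1:ℝ) - (a2:ℝ) - (a3:ℝ))*(((d0:ℝ):ℂ) + (d1:ℝ) - (d2:ℝ) - (d3:ℝ)) - (((b0:ℝ):ℂ) + (b1:ℝ) + (b2:ℝ) + (b3:ℝ))*(((c0:ℝ):ℂ) + (c1:ℝ) + (c2:ℝ) + (c3:ℝ)) - (((b0:ℝ):ℂ) + (b1:ℝ) - (b2:ℝ) - (b3:ℝ))*(((c0:ℝ):ℂ) + (c1:ℝ) - (c2:ℝ) - (c3:ℝ)) = 4 := by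
    linear_combination ((58/1 : ℂ)*Complex.I) * g2_10 + ((-112/1 : ℂ)*Complex.I) * g2_11 + ((52/1 : ℂ)*Complex.I) * g2_12 + ((2/1 : ℂ)*Complex.I) * g2_20 + ((4/1 : ℂ)) * cs00 + ((4/1 : ℂ)) * cs01 + ((-2/1 : ℂ)*(↑b3 : ℂ)*(↑c3 : ℂ) + (2/1 : ℂ)*(↑b3 : ℂ)*(↑c2 : ℂ) + (-2/1 : ℂ)*(↑b2 : ℂ)*(↑c3 : ℂ) + (2/1 : ℂ)*(↑b2 : ℂ)*(↑c2 : ℂ) + (-2/1 : ℂ)*(↑b1 : ℂ)*(↑c1 : ℂ) + (2/1 : ℂ)*(↑b1 : ℂ)*(↑c0 : ℂ) + (-2/1 : ℂ)*(↑b0 : ℂ)*(↑c1 : ℂ) + (2/1 : ℂ)*(↑b0 : ℂ)*(↑c0 : ℂ) + (2/1 : ℂ)*(↑a3 : ℂ)*(↑d3 : ℂ) + (2/1 : ℂ)*(↑a3 : ℂ)*(↑d2 : ℂ) + (-2/1 : ℂ)*(↑a2 : ℂ)*(↑d3 : ℂ) + (-2/1 : ℂ)*(↑a2 : ℂ)*(↑d2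 : ℂ) + (2/1 : ℂ)*(↑a1 : ℂ)*(↑d1 : ℂ) + (2/1 : ℂ)*(↑a1 : ℂ)*(↑d0 : ℂ) + (-2/1 : ℂ)*(↑a0 : ℂ)*(↑d1 : ℂ) + (-2/1 : ℂ)*(↑a0 : ℂ)*(↑d0 : ℂ)) * Complex.I_sq
  have hTS : (((a0:ℝ):ℂ) - (a1:ℝ) + (a2:ℝ) - (a3:ℝ))*(((d0:ℝ):ℂ) - (d1:ℝ) + (d2:ℝ) - (d3:ℝ)) + (((a0:ℝ):ℂ) - (a1:ℝ) - (a2:ℝ) + (a3:ℝ))*(((d0:ℝ):ℂ) - (d1:ℝ) - (d2:ℝ) + (d3:ℝ)) - (((b0:ℝ):ℂ) - (b1:ℝ) + (b2:ℝ) - (b3:ℝ))*(((c0:ℝ):ℂ) - (c1:ℝ) + (c2:ℝ) - (c3:ℝ)) - (((b0:ℝ):ℂ) - (b1:ℝ) - (b2:ℝ) + (b3:ℝ))*(((c0:ℝ):ℂ) - (c1:ℝ) - (c2:ℝ) + (c3:ℝ)) = 4 := by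
    linear_combination ((-34/1 : ℂ)*Complex.I) * g2_10 + ((80/1 : ℂ)*Complex.I) * g2_11 + ((-44/1 : ℂ)*Complex.I) * g2_12 + ((-2/1 : ℂ)*Complex.I) * g2_20 + ((4/1 : ℂ)) * cs00 + ((-4/1 : ℂ)) * cs01 + ((-2/1 : ℂ)*(↑b3 : ℂ)*(↑c3 : ℂ) + (-2/1 : ℂ)*(↑b3 : ℂ)*(↑c2 : ℂ) + (2/1 : ℂ)*(↑b2 : ℂ)*(↑c3 : ℂ) + (2/1 : ℂ)*(↑b2 : ℂ)*(↑c2 : ℂ) + (-2/1 : ℂ)*(↑b1 : ℂ)*(↑c1 : ℂ) + (-2/1 : ℂ)*(↑b1 : ℂ)*(↑c0 : ℂ) + (2/1 : ℂ)*(↑b0 : ℂ)*(↑c1 : ℂ) + (2/1 : ℂ)*(↑b0 : ℂ)*(↑c0 : ℂ) + (2/1 : ℂ)*(↑a3 : ℂ)*(↑d3 : ℂ) + (-2/1 : ℂ)*(↑a3 : ℂ)*(↑d2 : ℂ) + (2/1 : ℂ)*(↑a2 : ℂ)*(↑d3 : ℂ) + (-2/1 : ℂ)*(↑a2 : ℂ)*(↑d2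 : ℂ) + (2/1 : ℂ)*(↑a1 : ℂ)*(↑d1 : ℂ) + (-2/1 : ℂ)*(↑a1 : ℂ)*(↑d0 : ℂ) + (2/1 : ℂ)*(↑a0 : ℂ)*(↑d1 : ℂ) + (-2/1 : ℂ)*(↑a0 : ℂ)*(↑d0 : ℂ)) * Complex.I_sq
  rcases endgame _ _ _ _ _ _ _ _ _ _ _ _ _ _ _ _ hT1 hT2 hT3 hT4 hT5 hT6 hT7 hT8 hTP hTS with
    ⟨eA2, eA3, eB2, eB3, eC2, eC3, eD2, eD3⟩ | ⟨eA1, eA4, eB1, eB4, eC1, eC4, eD1, eD4⟩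
  · left
    rw [commQ_iff]
    have ra2 : a0 - a1 + a2 - a3 = 0 := by exact_mod_cast eA2
    have ra3 : a0 + a1 - a2 - a3 = 0 := by exact_mod_cast eA3
    have rb2 : b0 - b1 + b2 - b3 = 0 := by exact_mod_cast eB2
    have rb3 : b0 + b1 - b2 - b3 = 0 := by exact_mod_cast eB3
    have rc2 : c0 - c1 + c2 - c3 = 0 := by exact_mod_cast eC2
    have rc3 : c0 + c1 - c2 - c3 = 0 := by exact_mod_cast eC3
    have rd2 : d0 - d1 + d2 - d3 = 0 := by exact_mod_cast eD2
    have rd3 : d0 + d1 - d2 - d3 = 0 := by exact_mod_cast eD3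
    exact ⟨(comm_q_iff _).2 ⟨by rw [ha3, ha0]; linarith, by rw [ha2, ha1]; linarith⟩, (comm_q_iff _).2 ⟨by rw [hb3, hb0]; linarith, by rw [hb2, hb1]; linarith⟩, (comm_q_iff _).2 ⟨by rw [hc3, hc0]; linarith, by rw [hc2, hc1]; linarith⟩, (comm_q_iff _).2 ⟨by rw [hd3, hd0]; linarith, by rw [hd2, hd1]; linarith⟩⟩
  · right
    rw [anticommQ_iff]
    have ra1 : a0 + a1 + a2 + a3 = 0 := by exact_mod_cast eA1
    have ra4 : a0 - a1 - a2 + a3 = 0 := by exact_mod_cast eA4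
    have rb1 : b0 + b1 + b2 + b3 = 0 := by exact_mod_cast eB1
    have rb4 : b0 - b1 - b2 + b3 = 0 := by exact_mod_cast eB4
    have rc1 : c0 + c1 + c2 + c3 = 0 := by exact_mod_cast eC1
    have rc4 : c0 - c1 - c2 + c3 = 0 := by exact_mod_cast eC4
    have rd1 : d0 + d1 + d2 + d3 = 0 := by exact_mod_cast eD1
    have rd4 : d0 - d1 - d2 + d3 = 0 := by exact_mod_cast eD4
    exact ⟨(anticomm_q_iff _).2 ⟨by rw [ha3, ha0]; linarith, by rw [ha2, ha1]; linarith⟩, (anticomm_q_iff _).2 ⟨by rw [hb3, hb0]; linarith, by rw [hb2, hb1]; linarith⟩, (anticomm_q_iff _).2 ⟨by rw [hc3, hc0]; linarith, by rw [hc2, hc1]; linarith⟩, (anticomm_q_iff _).2 ⟨by rw [hd3, hd0]; linarith, by rw [hd2, hd1]; linarith⟩⟩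

lemma act_one (Z : Mat2) : act 1 Z = Z := by
  have h1 : (1 : Mat4) = Matrix.fromBlocks 1 0 0 1 := by rw [Matrix.fromBlocks_one]
  have hA : (1 : Mat4).toBlocks₁₁.map Complex.ofReal = 1 := by
    rw [h1, Matrix.toBlocks_fromBlocks₁₁]; ext i j
    fin_cases i <;> fin_cases j <;> simp [Matrix.one_apply]
  have hB : (1 : Mat4).toBlocks₁₂.map Complex.ofReal = 0 := by
    rw [h1, Matrix.toBlocks_fromBlocks₁₂]; ext i j
    fin_cases i <;> fin_cases j <;> simp
  have hC : (1 : Mat4).toBlocks₂₁.map Complex.ofReal = 0 := by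
    rw [h1, Matrix.toBlocks_fromBlocks₂₁]; ext i j
    fin_cases i <;> fin_cases j <;> simp
  have hD : (1 : Mat4).toBlocks₂₂.map Complex.ofReal = 1 := by
    rw [h1, Matrix.toBlocks_fromBlocks₂₂]; ext i j
    fin_cases i <;> fin_cases j <;> simp [Matrix.one_apply]
  rw [act, hA, hB, hC, hD, one_mul, add_zero, zero_mul, zero_add,
    Matrix.inv_eq_right_inv (mul_one (1 : Mat2)), mul_one]

lemma inv_commQ {M : Mat4} (hM : M ∈ Omega2) (hc : M * Qmat = Qmat * M) :
    M⁻¹ * Qmat = Qmat * M⁻¹ := by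
  have hu := Omega2.det_isUnit hM
  have h1 : M * M⁻¹ = 1 := Matrix.mul_nonsing_inv _ hu
  have h2 : M⁻¹ * M = 1 := Matrix.nonsing_inv_mul _ hu
  calc M⁻¹ * Qmat = M⁻¹ * Qmat * (M * M⁻¹) := by rw [h1, mul_one]
    _ = M⁻¹ * (Qmat * M) * M⁻¹ := by noncomm_ring
    _ = M⁻¹ * (M * Qmat) * M⁻¹ := by rw [hc]
    _ = (M⁻¹ * M) * (Qmat * M⁻¹) := by noncomm_ring
    _ = Qmat * M⁻¹ := by rw [h2, one_mul]

lemma inv_anticommQ {M : Mat4} (hM : M ∈ Omega2) (hc : M * Qmat = -(Qmat * M)) :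
    M⁻¹ * Qmat = -(Qmat * M⁻¹) := by
  have hu := Omega2.det_isUnit hM
  have h1 : M * M⁻¹ = 1 := Matrix.mul_nonsing_inv _ hu
  have h2 : M⁻¹ * M = 1 := Matrix.nonsing_inv_mul _ hu
  have hc' : Qmat * M = -(M * Qmat) := by rw [hc, neg_neg]
  calc M⁻¹ * Qmat = M⁻¹ * Qmat * (M * M⁻¹) := by rw [h1, mul_one]
    _ = M⁻¹ * (Qmat * M) * M⁻¹ := by noncomm_ring
    _ = M⁻¹ * (-(M * Qmat)) * M⁻¹ := by rw [hc']
    _ = -((M⁻¹ * M) * (Qmat * M⁻¹)) := by noncomm_ring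
    _ = -(Qmat * M⁻¹) := by rw [h2, one_mul]


/-- `M ∈ Ω₂` maps `Ĥ₂` into `Ĥ₂` iff `MQ = ±QM`; consequently
`Ω̂₂` is a subgroup of `Ω₂` acting on `Ĥ₂` by `(M, Z) ↦ M<Z>`. -/
theorem stmt_1 :
    (∀ M ∈ Omega2, (∀ Z ∈ Hhat, act M Z ∈ Hhat) ↔
      (M * Qmat = Qmat * M ∨ M * Qmat = -(Qmat * M))) ∧
    (1 : Mat4) ∈ OmegaHat ∧
    (∀ M ∈ OmegaHat, ∀ N ∈ OmegaHat, M * N ∈ OmegaHat) ∧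
    (∀ M ∈ OmegaHat, M⁻¹ ∈ OmegaHat) ∧
    (∀ Z ∈ Hhat, act 1 Z = Z) ∧
    (∀ M ∈ OmegaHat, ∀ N ∈ OmegaHat, ∀ Z ∈ Hhat, act (M * N) Z = act M (act N Z)) := by
  have main : ∀ M ∈ Omega2, (∀ Z ∈ Hhat, act M Z ∈ Hhat) ↔
      (M * Qmat = Qmat * M ∨ M * Qmat = -(Qmat * M)) := by
    intro M hM
    constructor
    · exact comm_of_preserve hM
    · rintro (hc | hc) Z hZ
      · exact (preserve_of_comm hM hc Z hZ).2
      · exact preserve_of_anti hM hc Z hZ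
  refine ⟨main, ⟨Omega2.one_mem, fun Z hZ => by rw [act_one]; exact hZ⟩, ?_, ?_,
    fun Z _ => act_one Z, ?_⟩
  · intro M hM N hN
    refine ⟨Omega2.mul_mem hM.1 hN.1, fun Z hZ => ?_⟩
    rw [act_mul M N Z (det_den_ne hN.2 hZ) (det_den_ne hM.2 (hN.2 Z hZ))]
    exact hM.2 _ (hN.2 Z hZ)
  · intro M hM
    have hO2 := Omega2.inv_mem hM.1
    refine ⟨hO2, ?_⟩
    have hpm := (main M hM.1).1 hM.2
    have hpm' : M⁻¹ * Qmat = Qmat * M⁻¹ ∨ M⁻¹ * Qmat = -(Qmat * M⁻¹) := by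
      rcases hpm with hc | hc
      · exact Or.inl (inv_commQ hM.1 hc)
      · exact Or.inr (inv_anticommQ hM.1 hc)
    exact (main M⁻¹ hO2).2 hpm'
  · intro M hM N hN Z hZ
    exact act_mul M N Z (det_den_ne hN.2 hZ) (det_den_ne hM.2 (hN.2 Z hZ))
end
end

section
/- The action of Ω̂₂ on Ĥ₂ is transitive: for any Z, W ∈ Ĥ₂ there exists M ∈ Ω̂₂ with M<Z> = W. In particular, for every Z ∈ Ĥ₂ there exists M ∈ Ω̂₂ with M<Z> = iI. -/
open Matrix Complex

noncomputable section

def e (x y : ℂ) : Mat2 := !![x, y; y, x]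
def eR (x y : ℝ) : Mat2R := !![x, y; y, x]

lemma eR_map (x y : ℝ) : (eR x y).map Complex.ofReal = e (x:ℂ) (y:ℂ) := by
  ext i j; fin_cases i <;> fin_cases j <;> simp [eR, e]

lemma e_mul (x y x' y' : ℂ) : e x y * e x' y' = e (x*x'+y*y') (x*y'+y*x') := by
  ext i j
  fin_cases i <;> fin_cases j <;>
    simp [e, Matrix.mul_apply, Fin.sum_univ_two] <;> ring

lemma eR_mul (x y x' y' : ℝ) : eR x y * eR x' y' = eR (x*x'+y*y') (x*y'+y*x') := by
  ext i j
  fin_cases i <;> fin_cases j <;>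
    simp [eR, Matrix.mul_apply, Fin.sum_univ_two] <;> ring

lemma e_add (x y x' y' : ℂ) : e x y + e x' y' = e (x+x') (y+y') := by
  ext i j; fin_cases i <;> fin_cases j <;> simp [e]

lemma e_one : e 1 0 = 1 := by
  ext i j; fin_cases i <;> fin_cases j <;> simp [e, Matrix.one_apply]

lemma eR_one : eR 1 0 = 1 := by
  ext i j; fin_cases i <;> fin_cases j <;> simp [eR, Matrix.one_apply]

lemma eR_transpose (x y : ℝ) : (eR x y)ᵀ = eR x y := by
  ext i j; fin_cases i <;> fin_cases j <;> simp [eR]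

/-- the upper-triangular symplectic element. -/
def Mup (r₁ r₂ c₁ c₂ : ℝ) : Mat4 :=
  Matrix.fromBlocks (eR ((r₁+r₂)/2) ((r₁-r₂)/2))
    (eR ((c₁/r₁+c₂/r₂)/2) ((c₁/r₁-c₂/r₂)/2))
    0 (eR ((1/r₁+1/r₂)/2) ((1/r₁-1/r₂)/2))

lemma Hhat_e_iff (τ z : ℂ) : e τ z ∈ Hhat ↔ 0 < (τ+z).im ∧ 0 < (τ-z).im := by
  have E00 : e τ z 0 0 = τ := rfl
  have E01 : e τ z 0 1 = z := rfl
  have E10 : e τ z 1 0 = z := rfl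
  have E11 : e τ z 1 1 = τ := rfl
  simp only [Hhat, Set.mem_setOf_eq, E00, E01, E10, E11, abs_lt, Complex.add_im,
    Complex.sub_im, true_and]
  constructor <;> rintro ⟨h1, h2⟩ <;> constructor <;> linarith

lemma eq_e_of_mem {Z : Mat2} (h : Z ∈ Hhat) : Z = e (Z 0 0) (Z 0 1) := by
  obtain ⟨h1, h2, -⟩ := h
  ext i j
  fin_cases i <;> fin_cases j <;> simp [e, h1, h2]

lemma Mup_mem_Omega2 {r₁ r₂ : ℝ} (c₁ c₂ : ℝ) (h₁ : r₁ ≠ 0) (h₂ : r₂ ≠ 0) :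
    Mup r₁ r₂ c₁ c₂ ∈ Omega2 := by
  have e1 : (r₁+r₂)/2 * ((1/r₁+1/r₂)/2) + (r₁-r₂)/2 * ((1/r₁-1/r₂)/2) = 1 := by
    field_simp; ring
  have e2 : (r₁+r₂)/2 * ((1/r₁-1/r₂)/2) + (r₁-r₂)/2 * ((1/r₁+1/r₂)/2) = 0 := by
    field_simp; ring
  have e1' : (1/r₁+1/r₂)/2 * ((r₁+r₂)/2) + (1/r₁-1/r₂)/2 * ((r₁-r₂)/2) = 1 := by
    field_simp; ring
  have e2' : (1/r₁+1/r₂)/2 * ((r₁-r₂)/2) + (1/r₁-1/r₂)/2 * ((r₁+r₂)/2) = 0 := by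
    field_simp; ring
  have hAD : eR ((r₁+r₂)/2) ((r₁-r₂)/2) * eR ((1/r₁+1/r₂)/2) ((1/r₁-1/r₂)/2) = 1 := by
    rw [eR_mul, e1, e2, eR_one]
  have hDA : eR ((1/r₁+1/r₂)/2) ((1/r₁-1/r₂)/2) * eR ((r₁+r₂)/2) ((r₁-r₂)/2) = 1 := by
    rw [eR_mul, e1', e2', eR_one]
  have hcomm : eR ((1/r₁+1/r₂)/2) ((1/r₁-1/r₂)/2) * eR ((c₁/r₁+c₂/r₂)/2) ((c₁/r₁-c₂/r₂)/2)
      = eR ((c₁/r₁+c₂/r₂)/2) ((c₁/r₁-c₂/r₂)/2) * eR ((1/r₁+1/r₂)/2) ((1/r₁-1/r₂)/2) := by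
    rw [eR_mul, eR_mul]; ring_nf
  show (Mup r₁ r₂ c₁ c₂)ᵀ * Jmat * Mup r₁ r₂ c₁ c₂ = Jmat
  rw [Mup, Jmat, Matrix.fromBlocks_transpose, Matrix.fromBlocks_multiply,
    Matrix.fromBlocks_multiply]
  simp only [eR_transpose, Matrix.mul_zero, Matrix.zero_mul, Matrix.mul_one,
    Matrix.mul_neg, Matrix.neg_mul, Matrix.one_mul, Matrix.transpose_zero,
    add_zero, zero_add, neg_zero]
  rw [hAD, hDA, hcomm]
  simp

lemma e_congr {x y x' y' : ℂ} (hx : x = x') (hy : y = y') : e x y = e x' y' := by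
  rw [hx, hy]

lemma im_scale (r c : ℝ) (w : ℂ) : ((r:ℂ)^2 * w + c).im = r^2 * w.im := by
  simp [← Complex.ofReal_pow]

lemma re_scale (r c : ℝ) (w : ℂ) : ((r:ℂ)^2 * w + c).re = r^2 * w.re + c := by
  simp [← Complex.ofReal_pow]

set_option maxHeartbeats 1000000 in
lemma Mup_act {r₁ r₂ : ℝ} (c₁ c₂ : ℝ) (h₁ : r₁ ≠ 0) (h₂ : r₂ ≠ 0) (τ z : ℂ) :
    act (Mup r₁ r₂ c₁ c₂) (e τ z) =
      e ((((r₁:ℂ)^2*(τ+z)+c₁) + ((r₂:ℂ)^2*(τ-z)+c₂))/2)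
        ((((r₁:ℂ)^2*(τ+z)+c₁) - ((r₂:ℂ)^2*(τ-z)+c₂))/2) := by
  have ee1 : ((((r₁+r₂)/2:ℝ)):ℂ) * (((1/r₁+1/r₂)/2:ℝ):ℂ)
      + (((r₁-r₂)/2:ℝ):ℂ) * (((1/r₁-1/r₂)/2:ℝ):ℂ) = 1 := by
    have h : ((r₁+r₂)/2) * ((1/r₁+1/r₂)/2) + ((r₁-r₂)/2) * ((1/r₁-1/r₂)/2) = (1:ℝ) := by
      field_simp; ring
    exact_mod_cast congrArg Complex.ofReal h
  have ee2 : ((((r₁+r₂)/2:ℝ)):ℂ) * (((1/r₁-1/r₂)/2:ℝ):ℂ)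
      + (((r₁-r₂)/2:ℝ):ℂ) * (((1/r₁+1/r₂)/2:ℝ):ℂ) = 0 := by
    have h : ((r₁+r₂)/2) * ((1/r₁-1/r₂)/2) + ((r₁-r₂)/2) * ((1/r₁+1/r₂)/2) = (0:ℝ) := by
      field_simp; ring
    exact_mod_cast congrArg Complex.ofReal h
  have ee1' : ((((1/r₁+1/r₂)/2:ℝ)):ℂ) * (((r₁+r₂)/2:ℝ):ℂ)
      + (((1/r₁-1/r₂)/2:ℝ):ℂ) * (((r₁-r₂)/2:ℝ):ℂ) = 1 := by
    rw [mul_comm, mul_comm (((1/r₁-1/r₂)/2:ℝ):ℂ)]; exact ee1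
  have ee2' : ((((1/r₁+1/r₂)/2:ℝ)):ℂ) * (((r₁-r₂)/2:ℝ):ℂ)
      + (((1/r₁-1/r₂)/2:ℝ):ℂ) * (((r₁+r₂)/2:ℝ):ℂ) = 0 := by
    rw [mul_comm, mul_comm (((1/r₁-1/r₂)/2:ℝ):ℂ)]
    rw [add_comm] at ee2; exact ee2
  have hInv : (e ((((1/r₁+1/r₂)/2:ℝ)):ℂ) (((1/r₁-1/r₂)/2:ℝ):ℂ))⁻¹
      = e (((r₁+r₂)/2:ℝ):ℂ) (((r₁-r₂)/2:ℝ):ℂ) := by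
    apply Matrix.inv_eq_left_inv
    rw [e_mul, ee1, ee2, e_one]
  have hDA : e ((((1/r₁+1/r₂)/2:ℝ)):ℂ) (((1/r₁-1/r₂)/2:ℝ):ℂ)
      * e (((r₁+r₂)/2:ℝ):ℂ) (((r₁-r₂)/2:ℝ):ℂ) = 1 := by
    rw [e_mul, ee1', ee2', e_one]
  have hB : e ((((c₁/r₁+c₂/r₂)/2:ℝ)):ℂ) (((c₁/r₁-c₂/r₂)/2:ℝ):ℂ)
      = e (((c₁+c₂)/2:ℝ):ℂ) (((c₁-c₂)/2:ℝ):ℂ)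
        * e ((((1/r₁+1/r₂)/2:ℝ)):ℂ) (((1/r₁-1/r₂)/2:ℝ):ℂ) := by
    rw [e_mul]
    apply e_congr
    · have h : (c₁/r₁+c₂/r₂)/2
          = ((c₁+c₂)/2) * ((1/r₁+1/r₂)/2) + ((c₁-c₂)/2) * ((1/r₁-1/r₂)/2) := by
        field_simp; ring
      exact_mod_cast congrArg Complex.ofReal h
    · have h : (c₁/r₁-c₂/r₂)/2
          = ((c₁+c₂)/2) * ((1/r₁-1/r₂)/2) + ((c₁-c₂)/2) * ((1/r₁+1/r₂)/2) := by
        field_simp; ring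
      exact_mod_cast congrArg Complex.ofReal h
  rw [act, Mup]
  rw [Matrix.toBlocks_fromBlocks₁₁, Matrix.toBlocks_fromBlocks₁₂,
    Matrix.toBlocks_fromBlocks₂₁, Matrix.toBlocks_fromBlocks₂₂]
  rw [eR_map, eR_map, eR_map]
  have hz : (0 : Mat2R).map Complex.ofReal = 0 :=
    Matrix.map_zero Complex.ofReal Complex.ofReal_zero
  have hBA : e ((((c₁/r₁+c₂/r₂)/2:ℝ)):ℂ) (((c₁/r₁-c₂/r₂)/2:ℝ):ℂ)
      * e (((r₁+r₂)/2:ℝ):ℂ) (((r₁-r₂)/2:ℝ):ℂ)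
      = e (((c₁+c₂)/2:ℝ):ℂ) (((c₁-c₂)/2:ℝ):ℂ) := by
    rw [hB, Matrix.mul_assoc, hDA, Matrix.mul_one]
  rw [hz, Matrix.zero_mul, zero_add, hInv, Matrix.add_mul, hBA, e_mul, e_mul, e_add]
  apply e_congr <;> push_cast <;> ring

lemma Mup_mem_OmegaHat {r₁ r₂ : ℝ} (c₁ c₂ : ℝ) (h₁ : 0 < r₁) (h₂ : 0 < r₂) :
    Mup r₁ r₂ c₁ c₂ ∈ OmegaHat := by
  refine ⟨Mup_mem_Omega2 c₁ c₂ h₁.ne' h₂.ne', ?_⟩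
  intro Z hZ
  have hZe := eq_e_of_mem hZ
  obtain ⟨ha, hb⟩ := (Hhat_e_iff (Z 0 0) (Z 0 1)).1 (hZe ▸ hZ)
  rw [hZe, Mup_act c₁ c₂ h₁.ne' h₂.ne']
  set τ := Z 0 0
  set z := Z 0 1
  set u₁ : ℂ := (r₁:ℂ)^2*(τ+z)+c₁ with hu₁
  set u₂ : ℂ := (r₂:ℂ)^2*(τ-z)+c₂ with hu₂
  rw [Hhat_e_iff]
  have h1 : (u₁+u₂)/2 + (u₁-u₂)/2 = u₁ := by ring
  have h2 : (u₁+u₂)/2 - (u₁-u₂)/2 = u₂ := by ring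
  rw [h1, h2, hu₁, hu₂, im_scale, im_scale]
  exact ⟨mul_pos (pow_pos h₁ 2) ha, mul_pos (pow_pos h₂ 2) hb⟩

lemma scale_exists {w u : ℂ} (hw : 0 < w.im) (hu : 0 < u.im) :
    ∃ r c : ℝ, 0 < r ∧ (r:ℂ)^2 * w + c = u := by
  have hd : 0 < u.im / w.im := div_pos hu hw
  refine ⟨Real.sqrt (u.im / w.im), u.re - Real.sqrt (u.im / w.im)^2 * w.re,
    Real.sqrt_pos.2 hd, ?_⟩
  have hsq : Real.sqrt (u.im / w.im)^2 = u.im / w.im := Real.sq_sqrt hd.le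
  apply Complex.ext
  · rw [re_scale]; ring
  · rw [im_scale, hsq, div_mul_cancel₀ _ hw.ne']

/-- the action of `Ω̂₂` on `Ĥ₂` is transitive; in particular every
point of `Ĥ₂` can be moved to `iI`. -/
theorem stmt_4 :
    (∀ Z ∈ Hhat, ∀ W ∈ Hhat, ∃ M ∈ OmegaHat, act M Z = W) ∧
    (∀ Z ∈ Hhat, ∃ M ∈ OmegaHat, act M Z = Complex.I • (1 : Mat2)) := by
  have hI : Complex.I • (1 : Mat2) = e Complex.I 0 := by
    ext i j
    fin_cases i <;> fin_cases j <;> simp [e, Matrix.one_apply]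
  have main : ∀ Z ∈ Hhat, ∀ W ∈ Hhat, ∃ M ∈ OmegaHat, act M Z = W := by
    intro Z hZ W hW
    have hZe := eq_e_of_mem hZ
    have hWe := eq_e_of_mem hW
    obtain ⟨ha, hb⟩ := (Hhat_e_iff (Z 0 0) (Z 0 1)).1 (hZe ▸ hZ)
    obtain ⟨hc, hd⟩ := (Hhat_e_iff (W 0 0) (W 0 1)).1 (hWe ▸ hW)
    obtain ⟨r₁, c₁, hr₁, hk₁⟩ := scale_exists ha hc
    obtain ⟨r₂, c₂, hr₂, hk₂⟩ := scale_exists hb hd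
    refine ⟨Mup r₁ r₂ c₁ c₂, Mup_mem_OmegaHat c₁ c₂ hr₁ hr₂, ?_⟩
    rw [hZe, Mup_act c₁ c₂ hr₁.ne' hr₂.ne', hk₁, hk₂]
    conv_rhs => rw [hWe]
    exact e_congr (by ring) (by ring)
  refine ⟨main, fun Z hZ => main Z hZ _ ?_⟩
  rw [hI, Hhat_e_iff]
  norm_num
end
end

section
/- Let Z, Z₁ ∈ Ĥ₂ and let M = [[A,B],[C,D]] ∈ Ω̂₂, and put W = M<Z>, W₁ = M<Z₁>. Then the cross ratio satisfies 𝔯(Z,Z₁) = ᵗ(CZ₁+D) · 𝔯(W,W₁) · (ᵗ(CZ₁+D))^{-1}. In particular the trace of the cross ratio is invariant: tr 𝔯(M<Z>, M<Z₁>) = tr 𝔯(Z,Z₁). -/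
open Matrix Complex

noncomputable section

/-- Entrywise complex conjugation of a matrix. -/
def conjM (Z : Mat2) : Mat2 := Z.map (starRingEnd ℂ)

/-- The cross ratio `𝔯(Z,Z₁) = (Z−Z₁)(Z−conj Z₁)⁻¹(conj Z−conj Z₁)(conj Z−Z₁)⁻¹`. -/
def crossRatio (Z Z₁ : Mat2) : Mat2 :=
  (Z - Z₁) * (Z - conjM Z₁)⁻¹ * (conjM Z - conjM Z₁) * (conjM Z - Z₁)⁻¹

/-! ### Auxiliary lemmas -/

lemma conjM_add (X Y : Mat2) : conjM (X + Y) = conjM X + conjM Y := Matrix.map_add _ (by simp) X Y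

lemma conjM_sub (X Y : Mat2) : conjM (X - Y) = conjM X - conjM Y := Matrix.map_sub _ (by simp) X Y

lemma conjM_mul (X Y : Mat2) : conjM (X * Y) = conjM X * conjM Y := Matrix.map_mul

lemma conjM_transpose (X : Mat2) : conjM Xᵀ = (conjM X)ᵀ := rfl

lemma conjM_conjM (X : Mat2) : conjM (conjM X) = X := by
  ext i j; simp [conjM]

lemma conjM_eq (X : Mat2) : conjM X = (Xᴴ)ᵀ := by
  ext i j; simp [conjM, conjTranspose_apply]

lemma conjM_inv (X : Mat2) : conjM X⁻¹ = (conjM X)⁻¹ := by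
  rw [conjM_eq, conjM_eq, conjTranspose_nonsing_inv, transpose_nonsing_inv]

lemma conjM_ofReal (X : Mat2R) : conjM (X.map Complex.ofReal) = X.map Complex.ofReal := by
  ext i j; simp [conjM]

lemma conjM_det (X : Mat2) : (conjM X).det = starRingEnd ℂ X.det :=
  ((RingHom.map_det (starRingEnd ℂ) X)).symm

lemma hhat_symm {Z : Mat2} (hZ : Z ∈ Hhat) : Zᵀ = Z := by
  obtain ⟨h1, h2, _⟩ := hZ
  ext i j; fin_cases i <;> fin_cases j <;> simp_all [Matrix.transpose_apply]

lemma conjM_mulVec (P : Mat2) (v : Fin 2 → ℂ) : conjM P *ᵥ star v = star (P *ᵥ v) := by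
  rw [conjM_eq, Matrix.mulVec_transpose, Matrix.star_mulVec]

/-- The key positivity fact: for `Z, Z₁ ∈ Ĥ₂`, the hermitian form attached to the
imaginary part of `Z - conj Z₁` is positive definite. -/
lemma L0 {Z Z₁ : Mat2} (hZ : Z ∈ Hhat) (hZ₁ : Z₁ ∈ Hhat) {v : Fin 2 → ℂ} (hv : v ≠ 0) :
    0 < (star v ⬝ᵥ ((Z - conjM Z₁) *ᵥ v)).im := by
  obtain ⟨h1, h2, h3⟩ := hZ
  obtain ⟨k1, k2, k3⟩ := hZ₁
  have hab : v 0 ≠ 0 ∨ v 1 ≠ 0 := by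
    by_contra h
    push_neg at h
    exact hv (funext fun i => by fin_cases i <;> simp [h.1, h.2])
  set a := v 0 with ha
  set b := v 1 with hb
  have hs : 0 < a.re ^ 2 + a.im ^ 2 + (b.re ^ 2 + b.im ^ 2) := by
    rcases hab with h | h
    · have := Complex.normSq_pos.mpr h
      rw [Complex.normSq_apply] at this; nlinarith [sq_nonneg b.re, sq_nonneg b.im]
    · have := Complex.normSq_pos.mpr h
      rw [Complex.normSq_apply] at this; nlinarith [sq_nonneg a.re, sq_nonneg a.im]
  rw [abs_lt] at h3 k3
  simp only [dotProduct, Matrix.mulVec, Fin.sum_univ_two, Matrix.sub_apply, conjM,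
    Matrix.map_apply, Pi.star_apply, ← ha, ← hb, h1, h2, k1, k2]
  simp only [Complex.add_im, Complex.mul_im, Complex.sub_im, Complex.sub_re, Complex.add_re,
    Complex.mul_re, Complex.conj_re, Complex.conj_im, RCLike.star_def]
  rcases le_or_gt 0 ((Z 0 1).im + (Z₁ 0 1).im) with hq | hq
  · nlinarith [mul_nonneg hq (add_nonneg (sq_nonneg (a.re + b.re)) (sq_nonneg (a.im + b.im))),
      mul_pos (by linarith : (0:ℝ) < (Z 0 0).im + (Z₁ 0 0).im - ((Z 0 1).im + (Z₁ 0 1).im)) hs]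
  · nlinarith [mul_nonneg (by linarith : (0:ℝ) ≤ -((Z 0 1).im + (Z₁ 0 1).im))
        (add_nonneg (sq_nonneg (a.re - b.re)) (sq_nonneg (a.im - b.im))),
      mul_pos (by linarith : (0:ℝ) < (Z 0 0).im + (Z₁ 0 0).im + ((Z 0 1).im + (Z₁ 0 1).im)) hs]

lemma det_sub_conj {Z Z₁ : Mat2} (hZ : Z ∈ Hhat) (hZ₁ : Z₁ ∈ Hhat) :
    (Z - conjM Z₁).det ≠ 0 := by
  intro h
  obtain ⟨v, hv, hv0⟩ := (Matrix.exists_mulVec_eq_zero_iff).mpr h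
  have := L0 hZ hZ₁ hv
  rw [hv0] at this
  simp at this

/-- The fundamental bracket identity for block matrices satisfying the symplectic relations. -/
lemma LB {A B C D : Mat2} (hAC : Cᵀ * A = Aᵀ * C) (hBD : Dᵀ * B = Bᵀ * D)
    (h1 : Aᵀ * D - Cᵀ * B = 1) (X Y : Mat2) :
    (C * X + D)ᵀ * (A * Y + B) - (A * X + B)ᵀ * (C * Y + D) = Y - Xᵀ := by
  have h2 : Dᵀ * A - Bᵀ * C = 1 := by
    have := congrArg Matrix.transpose h1
    simpa [Matrix.transpose_sub, Matrix.transpose_mul, Matrix.transpose_one] using this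
  have key : (C * X + D)ᵀ * (A * Y + B) - (A * X + B)ᵀ * (C * Y + D) =
      Xᵀ * (Cᵀ * A - Aᵀ * C) * Y + Xᵀ * (Cᵀ * B - Aᵀ * D) + (Dᵀ * A - Bᵀ * C) * Y +
        (Dᵀ * B - Bᵀ * D) := by
    simp only [Matrix.transpose_add, Matrix.transpose_mul]
    noncomm_ring
  rw [key, hAC, hBD]
  have h3 : Cᵀ * B - Aᵀ * D = -1 := by
    rw [← neg_sub, h1]
  rw [h3, h2]
  simp [Matrix.mul_neg]
  abel

/-- `C Z + D` is invertible for `Z ∈ Ĥ₂`. -/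
lemma det_N {A B C D : Mat2} (hAC : Cᵀ * A = Aᵀ * C) (hBD : Dᵀ * B = Bᵀ * D)
    (h1 : Aᵀ * D - Cᵀ * B = 1) (hCc : conjM C = C) (hDc : conjM D = D)
    {Z : Mat2} (hZ : Z ∈ Hhat) : (C * Z + D).det ≠ 0 := by
  intro h
  obtain ⟨v, hv, hv0⟩ := (Matrix.exists_mulVec_eq_zero_iff).mpr h
  have hpos := L0 hZ hZ hv
  have hid := LB hAC hBD h1 (conjM Z) Z
  rw [show (conjM Z)ᵀ = conjM Z from by rw [← conjM_transpose, hhat_symm hZ]] at hid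
  rw [← hid] at hpos
  have hconj : C * conjM Z + D = conjM (C * Z + D) := by
    rw [conjM_add, conjM_mul, hCc, hDc]
  have hz1 : (C * conjM Z + D) *ᵥ star v = 0 := by
    rw [hconj, conjM_mulVec, hv0]
    simp
  have e1 : star v ⬝ᵥ (((C * conjM Z + D)ᵀ * (A * Z + B)) *ᵥ v) = 0 := by
    rw [← Matrix.mulVec_mulVec, Matrix.dotProduct_mulVec, Matrix.vecMul_transpose, hz1]
    simp
  have e2 : star v ⬝ᵥ (((A * conjM Z + B)ᵀ * (C * Z + D)) *ᵥ v) = 0 := by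
    rw [← Matrix.mulVec_mulVec, hv0]
    simp
  rw [Matrix.sub_mulVec, dotProduct_sub, e1, e2] at hpos
  simp at hpos

lemma sandwich {P Q : Mat2} (hP : IsUnit P.det) (hQ : IsUnit Q.det) (X : Mat2) :
    P⁻¹ * (P * X * Q) * Q⁻¹ = X := by
  rw [Matrix.mul_assoc P, ← Matrix.mul_assoc P⁻¹, Matrix.nonsing_inv_mul _ hP, Matrix.one_mul,
    Matrix.mul_assoc, Matrix.mul_nonsing_inv _ hQ, Matrix.mul_one]

lemma inv3 {X Q : Mat2} (hX : IsUnit X.det) (hQ : IsUnit Q.det) (Y : Mat2) :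
    (X⁻¹ * Y * Q⁻¹)⁻¹ = Q * Y⁻¹ * X := by
  rw [Matrix.mul_inv_rev, Matrix.mul_inv_rev, Matrix.nonsing_inv_nonsing_inv _ hQ,
    Matrix.nonsing_inv_nonsing_inv _ hX, ← Matrix.mul_assoc]

/-- The fundamental transformation identity for differences. -/
lemma L3 {A B C D : Mat2} (hAC : Cᵀ * A = Aᵀ * C) (hBD : Dᵀ * B = Bᵀ * D)
    (h1 : Aᵀ * D - Cᵀ * B = 1) {Z Z₁ : Mat2} (hZ₁s : Z₁ᵀ = Z₁)
    (hN : IsUnit (C * Z + D).det) (hN₁ : IsUnit (C * Z₁ + D).det)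
    (hW₁s : ((A * Z₁ + B) * (C * Z₁ + D)⁻¹)ᵀ = (A * Z₁ + B) * (C * Z₁ + D)⁻¹) :
    (A * Z + B) * (C * Z + D)⁻¹ - (A * Z₁ + B) * (C * Z₁ + D)⁻¹ =
      ((C * Z₁ + D)ᵀ)⁻¹ * (Z - Z₁) * (C * Z + D)⁻¹ := by
  set N := C * Z + D with hNdef
  set N₁ := C * Z₁ + D with hN₁def
  set W := (A * Z + B) * N⁻¹ with hWdef
  set W₁ := (A * Z₁ + B) * N₁⁻¹ with hW₁def
  have hT₁ : IsUnit (N₁ᵀ).det := by rwa [Matrix.det_transpose]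
  have key : N₁ᵀ * (W - W₁) * N = Z - Z₁ := by
    have e1 : N₁ᵀ * W * N = N₁ᵀ * (A * Z + B) := by
      rw [hWdef, Matrix.mul_assoc, Matrix.mul_assoc, Matrix.nonsing_inv_mul N hN, Matrix.mul_one]
    have e2 : N₁ᵀ * W₁ = (A * Z₁ + B)ᵀ := by
      rw [← hW₁s, hW₁def, Matrix.transpose_mul, Matrix.transpose_nonsing_inv, ← Matrix.mul_assoc,
        Matrix.mul_nonsing_inv _ hT₁, Matrix.one_mul]
    calc N₁ᵀ * (W - W₁) * N = N₁ᵀ * W * N - N₁ᵀ * W₁ * N := by noncomm_ring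
    _ = N₁ᵀ * (A * Z + B) - (A * Z₁ + B)ᵀ * N := by rw [e1, e2]
    _ = Z - Z₁ᵀ := by rw [hNdef, hN₁def]; exact LB hAC hBD h1 Z₁ Z
    _ = Z - Z₁ := by rw [hZ₁s]
  calc W - W₁ = (N₁ᵀ)⁻¹ * (N₁ᵀ * (W - W₁) * N) * N⁻¹ := (sandwich hT₁ hN _).symm
    _ = (N₁ᵀ)⁻¹ * (Z - Z₁) * N⁻¹ := by rw [key]

lemma symp_rel {M : Mat4} (hM : M ∈ Omega2) :
    M.toBlocks₂₁ᵀ * M.toBlocks₁₁ = M.toBlocks₁₁ᵀ * M.toBlocks₂₁ ∧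
    M.toBlocks₂₂ᵀ * M.toBlocks₁₂ = M.toBlocks₁₂ᵀ * M.toBlocks₂₂ ∧
    M.toBlocks₁₁ᵀ * M.toBlocks₂₂ - M.toBlocks₂₁ᵀ * M.toBlocks₁₂ = 1 := by
  have h : Mᵀ * Jmat * M = Jmat := hM
  rw [← Matrix.fromBlocks_toBlocks M] at h
  set A := M.toBlocks₁₁; set B := M.toBlocks₁₂; set C := M.toBlocks₂₁; set D := M.toBlocks₂₂
  rw [Jmat, Matrix.fromBlocks_transpose, Matrix.fromBlocks_multiply,
    Matrix.fromBlocks_multiply] at h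
  simp only [Matrix.mul_zero, Matrix.zero_mul, Matrix.mul_one, Matrix.one_mul, Matrix.mul_neg,
    Matrix.neg_mul, add_zero, zero_add] at h
  rw [Matrix.fromBlocks_inj] at h
  obtain ⟨e11, e12, e21, e22⟩ := h
  rw [neg_add_eq_sub, sub_eq_zero] at e11 e22
  rw [neg_add_eq_sub] at e12
  exact ⟨e11.symm, e22.symm, e12⟩

lemma mapC_mul (X Y : Mat2R) :
    (X * Y).map Complex.ofReal = X.map Complex.ofReal * Y.map Complex.ofReal := by
  ext i j
  simp [Matrix.mul_apply, Matrix.map_apply]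

lemma mapC_transpose (X : Mat2R) : (Xᵀ).map Complex.ofReal = (X.map Complex.ofReal)ᵀ := rfl

lemma mapC_one : (1 : Mat2R).map Complex.ofReal = 1 := by
  ext i j
  by_cases h : i = j <;> simp [Matrix.one_apply, h]

lemma mapC_sub (X Y : Mat2R) :
    (X - Y).map Complex.ofReal = X.map Complex.ofReal - Y.map Complex.ofReal := by
  ext i j; simp

/-- behaviour of the cross ratio under `M ∈ Ω̂₂`; in particular the
trace of the cross ratio is invariant. -/
theorem stmt_9 (Z Z₁ : Mat2) (hZ : Z ∈ Hhat) (hZ₁ : Z₁ ∈ Hhat)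
    (M : Mat4) (hM : M ∈ OmegaHat) :
    crossRatio Z Z₁ =
      (M.toBlocks₂₁.map Complex.ofReal * Z₁ + M.toBlocks₂₂.map Complex.ofReal)ᵀ *
        crossRatio (act M Z) (act M Z₁) *
        ((M.toBlocks₂₁.map Complex.ofReal * Z₁ + M.toBlocks₂₂.map Complex.ofReal)ᵀ)⁻¹ ∧
    (crossRatio (act M Z) (act M Z₁)).trace = (crossRatio Z Z₁).trace := by
  obtain ⟨hMs, hMa⟩ := hM
  obtain ⟨r1, r2, r3⟩ := symp_rel hMs
  set A : Mat2 := M.toBlocks₁₁.map Complex.ofReal with hA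
  set B : Mat2 := M.toBlocks₁₂.map Complex.ofReal with hB
  set C : Mat2 := M.toBlocks₂₁.map Complex.ofReal with hC
  set D : Mat2 := M.toBlocks₂₂.map Complex.ofReal with hD
  -- complex symplectic relations
  have hAC : Cᵀ * A = Aᵀ * C := by
    rw [hA, hC, ← mapC_transpose, ← mapC_transpose, ← mapC_mul, ← mapC_mul, r1]
  have hBD : Dᵀ * B = Bᵀ * D := by
    rw [hB, hD, ← mapC_transpose, ← mapC_transpose, ← mapC_mul, ← mapC_mul, r2]
  have h1 : Aᵀ * D - Cᵀ * B = 1 := by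
    rw [hA, hB, hC, hD, ← mapC_transpose, ← mapC_transpose, ← mapC_mul, ← mapC_mul,
      ← mapC_sub, r3, mapC_one]
  have hAc : conjM A = A := conjM_ofReal _
  have hBc : conjM B = B := conjM_ofReal _
  have hCc : conjM C = C := conjM_ofReal _
  have hDc : conjM D = D := conjM_ofReal _
  -- notation for the action
  have hact : ∀ Y : Mat2, act M Y = (A * Y + B) * (C * Y + D)⁻¹ := fun Y => rfl
  have hconjact : ∀ Y : Mat2,
      conjM ((A * Y + B) * (C * Y + D)⁻¹) =
        (A * conjM Y + B) * (C * conjM Y + D)⁻¹ := by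
    intro Y
    rw [conjM_mul, conjM_inv, conjM_add, conjM_add, conjM_mul, conjM_mul, hAc, hBc, hCc, hDc]
  -- determinants
  have hdN : IsUnit (C * Z + D).det := isUnit_iff_ne_zero.mpr (det_N hAC hBD h1 hCc hDc hZ)
  have hdN₁ : IsUnit (C * Z₁ + D).det := isUnit_iff_ne_zero.mpr (det_N hAC hBD h1 hCc hDc hZ₁)
  have hdet_conj : ∀ X : Mat2, IsUnit (C * X + D).det → IsUnit (C * conjM X + D).det := by
    intro X hX
    have e : C * conjM X + D = conjM (C * X + D) := by
      rw [conjM_add, conjM_mul, hCc, hDc]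
    rw [e, conjM_det, isUnit_iff_ne_zero]
    intro h
    apply isUnit_iff_ne_zero.mp hX
    have := congrArg (starRingEnd ℂ) h
    simpa using this
  have hdNc := hdet_conj Z hdN
  have hdN₁c := hdet_conj Z₁ hdN₁
  -- symmetry facts
  have hW : act M Z ∈ Hhat := hMa Z hZ
  have hW₁ : act M Z₁ ∈ Hhat := hMa Z₁ hZ₁
  have hW₁s : ((A * Z₁ + B) * (C * Z₁ + D)⁻¹)ᵀ = (A * Z₁ + B) * (C * Z₁ + D)⁻¹ := by
    rw [← hact]; exact hhat_symm hW₁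
  have hsymm_conj : ∀ X : Mat2, Xᵀ = X → (conjM X)ᵀ = conjM X := fun X h => by
    rw [← conjM_transpose, h]
  have hcW₁s : ((A * conjM Z₁ + B) * (C * conjM Z₁ + D)⁻¹)ᵀ =
      (A * conjM Z₁ + B) * (C * conjM Z₁ + D)⁻¹ := by
    rw [← hconjact]; exact hsymm_conj _ hW₁s
  -- the four difference identities
  have d1 := L3 hAC hBD h1 (hhat_symm hZ₁) hdN hdN₁ hW₁s
  have d2 := L3 hAC hBD h1 (hsymm_conj _ (hhat_symm hZ₁)) hdN hdN₁c hcW₁s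
  have d3 := L3 hAC hBD h1 (hsymm_conj _ (hhat_symm hZ₁)) hdNc hdN₁c hcW₁s
  have d4 := L3 hAC hBD h1 (hhat_symm hZ₁) hdNc hdN₁ hW₁s
  -- transposed determinant facts
  have hT : IsUnit (((C * Z₁ + D))ᵀ).det := by rwa [Matrix.det_transpose]
  have hU : IsUnit (((C * conjM Z₁ + D))ᵀ).det := by rwa [Matrix.det_transpose]
  have cancel₁ : ∀ (P : Mat2), IsUnit P.det → ∀ X : Mat2, P⁻¹ * (P * X) = X := by
    intro P hP X
    rw [← Matrix.mul_assoc, Matrix.nonsing_inv_mul _ hP, Matrix.one_mul]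
  have cancel₂ : ∀ (P : Mat2), IsUnit P.det → ∀ X : Mat2, P * (P⁻¹ * X) = X := by
    intro P hP X
    rw [← Matrix.mul_assoc, Matrix.mul_nonsing_inv _ hP, Matrix.one_mul]
  have hTT : (C * Z₁ + D)ᵀ * ((C * Z₁ + D)ᵀ)⁻¹ = 1 := Matrix.mul_nonsing_inv _ hT
  have hcr : crossRatio (act M Z) (act M Z₁) =
      ((C * Z₁ + D)ᵀ)⁻¹ * ((Z - Z₁) * ((Z - conjM Z₁)⁻¹ *
        ((conjM Z - conjM Z₁) * ((conjM Z - Z₁)⁻¹ * (C * Z₁ + D)ᵀ)))) := by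
    rw [crossRatio, hact, hact, hconjact, hconjact, d1, d2, d3, d4,
      inv3 hU hdN _, inv3 hT hdNc _]
    simp only [Matrix.mul_assoc, cancel₁ _ hdN, cancel₂ _ hU, cancel₁ _ hdNc]
  have part1 : crossRatio Z Z₁ =
      (C * Z₁ + D)ᵀ * crossRatio (act M Z) (act M Z₁) * ((C * Z₁ + D)ᵀ)⁻¹ := by
    rw [hcr, crossRatio]
    simp only [Matrix.mul_assoc, cancel₂ _ hT, hTT, Matrix.mul_one]
  have part2 : ((C * Z₁ + D)ᵀ * crossRatio (act M Z) (act M Z₁) * ((C * Z₁ + D)ᵀ)⁻¹).trace =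
      (crossRatio (act M Z) (act M Z₁)).trace := by
    rw [Matrix.trace_mul_comm, ← Matrix.mul_assoc, Matrix.nonsing_inv_mul _ hT, Matrix.one_mul]
  exact ⟨part1, by rw [part1, part2]⟩
end
end

section
/- Let Z ∈ Ĥ₂ with imaginary part Y = Im Z, and let H = [[h₁,h₂],[h₂,h₁]] be a nonzero complex bi-symmetric 2×2 matrix. Then tr(Y^{-1} H Y^{-1} conj(H)) is a positive real number. (That is, the symplectic metric ds² = tr(Y^{-1} dZ Y^{-1} d(conj Z)) is positive definite at every point of Ĥ₂.) -/
open Matrix Complex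

noncomputable section

/-- The imaginary part `Y = Im Z` of a complex matrix, as a real matrix. -/
def imPart (Z : Mat2) : Mat2R := Z.map Complex.im

/-- The symplectic quadratic form `tr(Y⁻¹ H Y⁻¹ conj H)` at the point `Z`
(with `Y = Im Z`), evaluated on the tangent `H`. -/
def metricForm (Z H : Mat2) : ℂ :=
  (((imPart Z)⁻¹).map Complex.ofReal * H * ((imPart Z)⁻¹).map Complex.ofReal *
    conjM H).trace

/-- the symplectic metric `ds² = tr(Y⁻¹ dZ Y⁻¹ d(conj Z))` is
positive definite at every point of `Ĥ₂`: for a nonzero bi-symmetric `H`,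
`tr(Y⁻¹ H Y⁻¹ conj H)` is a positive real number. -/
theorem stmt_11 (Z : Mat2) (hZ : Z ∈ Hhat) (H : Mat2)
    (hsym : H 1 1 = H 0 0 ∧ H 1 0 = H 0 1) (hne : H ≠ 0) :
    (metricForm Z H).im = 0 ∧ 0 < (metricForm Z H).re := by
  obtain ⟨hz1, hz2, hlt⟩ := hZ
  obtain ⟨hs1, hs2⟩ := hsym
  set y := (Z 0 0).im with hy
  set v := (Z 0 1).im with hv
  set h1 := H 0 0 with hh1
  set h2 := H 0 1 with hh2
  have hd : 0 < y * y - v * v := by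
    nlinarith [abs_lt.mp hlt, abs_nonneg v, le_abs_self v, neg_abs_le v]
  set a : ℝ := y / (y * y - v * v) with ha
  set b : ℝ := -v / (y * y - v * v) with hb
  have hY : imPart Z = !![y, v; v, y] := by
    ext i j; fin_cases i <;> fin_cases j <;> simp [imPart, hz1, hz2, hy, hv]
  have hYinv : (imPart Z)⁻¹ = !![a, b; b, a] := by
    apply Matrix.inv_eq_right_inv
    rw [hY]
    ext i j
    fin_cases i <;> fin_cases j <;>
      simp [Matrix.mul_apply, Fin.sum_univ_two, ha, hb] <;> field_simp [(by nlinarith : (0:ℝ) < y ^ 2 - v ^ 2).ne', (by nlinarith : (0:ℝ) < -v ^ 2 + y ^ 2).ne'] <;> ring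
  have hH : H = !![h1, h2; h2, h1] := by
    ext i j; fin_cases i <;> fin_cases j <;> simp [hs1, hs2, hh1, hh2]
  set p : ℂ := (a : ℂ) * h1 + (b : ℂ) * h2 with hp
  set q : ℂ := (a : ℂ) * h2 + (b : ℂ) * h1 with hq
  have key : metricForm Z H = 2 * (p * (starRingEnd ℂ) p + q * (starRingEnd ℂ) q) := by
    rw [metricForm, hYinv, hH]
    simp [conjM, Matrix.trace_fin_two, Matrix.mul_apply, Fin.sum_univ_two,
      _root_.map_add, _root_.map_mul, Complex.conj_ofReal, hp, hq]
    ring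
  have key2 : metricForm Z H =
      ((2 * (Complex.normSq p + Complex.normSq q) : ℝ) : ℂ) := by
    rw [key, Complex.mul_conj, Complex.mul_conj]
    push_cast
    ring
  have hab : a * a - b * b ≠ 0 := by
    have : a * a - b * b = 1 / (y * y - v * v) := by
      rw [ha, hb]; field_simp
    rw [this]
    positivity
  have hpq : p ≠ 0 ∨ q ≠ 0 := by
    by_contra h
    push_neg at h
    obtain ⟨hp0, hq0⟩ := h
    have e1 : ((a : ℂ) * (a : ℂ) - (b : ℂ) * (b : ℂ)) * h1 = 0 := by
      have : (a : ℂ) * p - (b : ℂ) * q = ((a : ℂ) * (a : ℂ) - (b : ℂ) * (b : ℂ)) * h1 := by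
        rw [hp, hq]; ring
      rw [hp0, hq0] at this; simpa using this.symm
    have e2 : ((a : ℂ) * (a : ℂ) - (b : ℂ) * (b : ℂ)) * h2 = 0 := by
      have : (a : ℂ) * q - (b : ℂ) * p = ((a : ℂ) * (a : ℂ) - (b : ℂ) * (b : ℂ)) * h2 := by
        rw [hp, hq]; ring
      rw [hp0, hq0] at this; simpa using this.symm
    have habC : ((a : ℂ) * (a : ℂ) - (b : ℂ) * (b : ℂ)) ≠ 0 := by
      intro h0
      apply hab
      have := congrArg Complex.re h0
      simpa [Complex.sub_re, Complex.mul_re] using this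
    have h1z : h1 = 0 := by
      rcases mul_eq_zero.mp e1 with h | h
      · exact absurd h habC
      · exact h
    have h2z : h2 = 0 := by
      rcases mul_eq_zero.mp e2 with h | h
      · exact absurd h habC
      · exact h
    apply hne
    rw [hH, h1z, h2z]
    ext i j; fin_cases i <;> fin_cases j <;> simp
  have hpos : 0 < Complex.normSq p + Complex.normSq q := by
    rcases hpq with h | h
    · have := Complex.normSq_pos.mpr h
      nlinarith [Complex.normSq_nonneg q]
    · have := Complex.normSq_pos.mpr h
      nlinarith [Complex.normSq_nonneg p]
  rw [key2]
  constructor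
  · simp
  · simp only [Complex.ofReal_re]
    linarith
end
end
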